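/- arXiv:2011.14360 — 5 statements merged into one kernel-verified Lean document; each statement's English description precedes it below -/
import Mathlib

section
/- For all integers k ≥ 2, n ≥ 1 and m with 1 ≤ m ≤ n+k, the parametrized k-descent-avoiding counts satisfy the recurrence f_k(m, n+k) = f_k(n+k-1) − ( Σ_{u=1}^{n} f_k(u,n)·C(m-1, k-1) − Σ_{u=1}^{min(m-1, n)} f_k(u,n)·C(m-1-u, k-1) ), where C(a,b) denotes the binomial coefficient (equal to 0 when b > a). -/
/-- The value `w(i)` (1-based, taking values in `{1,...,n}`) of a permutation
`w ∈ S_n`, with the convention `w(i) = 0` for `i` out of range. -/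
def permVal (n : ℕ) (w : Equiv.Perm (Fin n)) (i : ℕ) : ℕ :=
  if h : i - 1 < n then (w ⟨i - 1, h⟩ : ℕ) + 1 else 0

/-- The set of starting indices (1-based) of `k`-descents of `w ∈ S_n`:
indices `i` with `1 ≤ i ≤ n - k + 1` such that `w(i) > w(i+1) > ⋯ > w(i+k-1)`. -/
def kDescentSet (k n : ℕ) (w : Equiv.Perm (Fin n)) : Finset ℕ :=
  (Finset.Icc 1 (n + 1 - k)).filter
    (fun i => ∀ j < k - 1, permVal n w (i + j + 1) < permVal n w (i + j))

/-- `d_k(I,n)`: the number of permutations of `S_n` whose `k`-descent set is `I`. -/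
def dI (k n : ℕ) (I : Finset ℕ) : ℕ :=
  (Finset.univ.filter (fun w : Equiv.Perm (Fin n) => kDescentSet k n w = I)).card

/-- `d_k(I,m,n)`: as `d_k(I,n)` but additionally requiring `w(1) = m`. -/
def dIm (k : ℕ) (I : Finset ℕ) (m n : ℕ) : ℕ :=
  (Finset.univ.filter
    (fun w : Equiv.Perm (Fin n) => kDescentSet k n w = I ∧ permVal n w 1 = m)).card

/-- `f_k(n) = d_k(∅, n)`, the number of `k`-descent-avoiding permutations in `S_n`. -/
def fK (k n : ℕ) : ℕ := dI k n ∅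

/-- `f_k(m,n) = d_k(∅, m, n)`. -/
def fKm (k m n : ℕ) : ℕ := dIm k ∅ m n

section Helpers

lemma permVal_eq {n : ℕ} (w : Equiv.Perm (Fin n)) {i : ℕ} (h1 : 1 ≤ i) (h2 : i ≤ n) :
    permVal n w i = (w ⟨i - 1, by omega⟩ : ℕ) + 1 := by
  rw [permVal, dif_pos]

lemma kDescentSet_eq_empty_iff {k n : ℕ} (w : Equiv.Perm (Fin n)) :
    kDescentSet k n w = ∅ ↔
      ∀ i, 1 ≤ i → i + k ≤ n + 1 →
        ∃ j < k - 1, permVal n w (i + j) ≤ permVal n w (i + j + 1) := by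
  rw [kDescentSet, Finset.filter_eq_empty_iff]
  constructor
  · intro h i h1 h2
    have hmem : i ∈ Finset.Icc 1 (n + 1 - k) := by rw [Finset.mem_Icc]; omega
    have := h hmem
    push_neg at this
    obtain ⟨j, hj, hle⟩ := this
    exact ⟨j, hj, hle⟩
  · intro h i hmem hall
    rw [Finset.mem_Icc] at hmem
    obtain ⟨j, hj, hle⟩ := h i hmem.1 (by omega)
    exact absurd (hall j hj) (not_lt.2 hle)

lemma strictMono_le_apply' {a b : ℕ} {g : Fin a → Fin b} (hg : StrictMono g) :
    ∀ c, ∀ i : Fin a, (i : ℕ) = c → c ≤ (g i : ℕ) := by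
  intro c
  induction c with
  | zero => intro i _; exact Nat.zero_le _
  | succ c ih =>
    intro i hi
    have hia := i.isLt
    have hc : c < a := by omega
    have hlt : (⟨c, hc⟩ : Fin a) < i := by rw [Fin.lt_def]; simpa using by omega
    have h1 := hg hlt
    have h2 := ih ⟨c, hc⟩ rfl
    rw [Fin.lt_def] at h1
    omega

lemma strictMono_le_apply {a b : ℕ} {g : Fin a → Fin b} (hg : StrictMono g) (i : Fin a) :
    (i : ℕ) ≤ (g i : ℕ) :=
  strictMono_le_apply' hg _ i rfl

end Helpers

section Insert

def insFun {N : ℕ} (p : Fin (N + 1)) (v : Equiv.Perm (Fin N)) : Fin (N + 1) → Fin (N + 1) :=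
  fun x => Fin.cases p (fun i => p.succAbove (v i)) x

lemma insFun_injective {N : ℕ} (p : Fin (N + 1)) (v : Equiv.Perm (Fin N)) :
    Function.Injective (insFun p v) := by
  intro a b hab
  induction a using Fin.cases with
  | zero =>
    induction b using Fin.cases with
    | zero => rfl
    | succ j => simp only [insFun, Fin.cases_zero, Fin.cases_succ] at hab
                exact absurd hab.symm (Fin.succAbove_ne p (v j))
  | succ i =>
    induction b using Fin.cases with
    | zero => simp only [insFun, Fin.cases_zero, Fin.cases_succ] at hab
              exact absurd hab (Fin.succAbove_ne p (v i))
    | succ j =>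
      simp only [insFun, Fin.cases_succ] at hab
      have := v.injective (Fin.succAbove_right_injective hab)
      rw [this]

noncomputable def insertPerm {N : ℕ} (p : Fin (N + 1)) (v : Equiv.Perm (Fin N)) :
    Equiv.Perm (Fin (N + 1)) :=
  Equiv.ofBijective _ ((Finite.injective_iff_bijective).1 (insFun_injective p v))

lemma insertPerm_zero {N : ℕ} (p : Fin (N + 1)) (v : Equiv.Perm (Fin N)) :
    insertPerm p v 0 = p := rfl

lemma insertPerm_succ {N : ℕ} (p : Fin (N + 1)) (v : Equiv.Perm (Fin N)) (i : Fin N) :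
    insertPerm p v i.succ = p.succAbove (v i) := by
  show insFun p v i.succ = _
  simp [insFun]

lemma insertPerm_pair_injective {N : ℕ} :
    Function.Injective
      (fun pv : Fin (N + 1) × Equiv.Perm (Fin N) => insertPerm pv.1 pv.2) := by
  rintro ⟨p, v⟩ ⟨q, u⟩ h
  simp only at h
  have hpq : p = q := by
    have := Equiv.ext_iff.1 h 0
    rwa [insertPerm_zero, insertPerm_zero] at this
  subst hpq
  have hvu : v = u := by
    apply Equiv.ext
    intro i
    have := Equiv.ext_iff.1 h i.succ
    rw [insertPerm_succ, insertPerm_succ] at this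
    exact Fin.succAbove_right_injective this
  rw [hvu]

lemma exists_insertPerm {N : ℕ} (w : Equiv.Perm (Fin (N + 1))) :
    ∃ p v, insertPerm p v = w := by
  have hbij : Function.Bijective
      (fun pv : Fin (N + 1) × Equiv.Perm (Fin N) => insertPerm pv.1 pv.2) := by
    rw [Fintype.bijective_iff_injective_and_card]
    refine ⟨insertPerm_pair_injective, ?_⟩
    rw [Fintype.card_prod, Fintype.card_perm, Fintype.card_perm, Fintype.card_fin,
      Fintype.card_fin, Nat.factorial_succ]
  obtain ⟨⟨p, v⟩, hp⟩ := hbij.2 w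
  exact ⟨p, v, hp⟩

end Insert

section InsertPV

variable {N : ℕ} (p : Fin (N + 1)) (v : Equiv.Perm (Fin N))

lemma permVal_insertPerm_one :
    permVal (N + 1) (insertPerm p v) 1 = (p : ℕ) + 1 := by
  rw [permVal_eq _ le_rfl (by omega)]
  have h0 : (⟨1 - 1, by omega⟩ : Fin (N + 1)) = 0 := by
    apply Fin.ext; simp
  rw [h0, insertPerm_zero]

lemma permVal_insertPerm {i : ℕ} (h1 : 1 ≤ i) (h2 : i ≤ N) :
    permVal (N + 1) (insertPerm p v) (i + 1)
      = (p.succAbove (v ⟨i - 1, by omega⟩) : ℕ) + 1 := by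
  rw [permVal_eq _ (by omega) (by omega)]
  have h0 : (⟨i + 1 - 1, by omega⟩ : Fin (N + 1)) = Fin.succ ⟨i - 1, by omega⟩ := by
    apply Fin.ext; simp [Fin.val_succ]; omega
  rw [h0, insertPerm_succ]

lemma pv_ins_le_iff {i j : ℕ} (hi1 : 1 ≤ i) (hi2 : i ≤ N) (hj1 : 1 ≤ j) (hj2 : j ≤ N) :
    (permVal (N + 1) (insertPerm p v) (i + 1) ≤ permVal (N + 1) (insertPerm p v) (j + 1)
      ↔ permVal N v i ≤ permVal N v j) := by
  rw [permVal_insertPerm p v hi1 hi2, permVal_insertPerm p v hj1 hj2,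
    permVal_eq _ hi1 hi2, permVal_eq _ hj1 hj2]
  rw [Nat.add_le_add_iff_right, Nat.add_le_add_iff_right]
  rw [← Fin.le_def, ← Fin.le_def, Fin.succAbove_le_succAbove_iff]

lemma pv_ins_lt_iff {i : ℕ} (hi1 : 1 ≤ i) (hi2 : i ≤ N) :
    (permVal (N + 1) (insertPerm p v) (i + 1) < (p : ℕ) + 1
      ↔ permVal N v i < (p : ℕ) + 1) := by
  rw [permVal_insertPerm p v hi1 hi2, permVal_eq _ hi1 hi2]
  rw [Nat.add_lt_add_iff_right, Nat.add_lt_add_iff_right]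
  rw [← Fin.lt_def, Fin.succAbove_lt_iff_castSucc_lt, Fin.lt_def, Fin.coe_castSucc]

end InsertPV

def HC (K n m : ℕ) (v : Equiv.Perm (Fin n)) : Prop :=
  (∀ j, 1 ≤ j → j < K → permVal n v (j + 1) < permVal n v j) ∧ permVal n v 1 < m

open scoped Classical in
noncomputable def BadSet (K n m : ℕ) : Finset (Equiv.Perm (Fin (n + K))) :=
  Finset.univ.filter (fun v => kDescentSet (K + 1) (n + K) v = ∅ ∧ HC K (n + K) m v)


lemma insertPerm_av_iff {K n m : ℕ} (hK : 1 ≤ K) (hn : 1 ≤ n) (hm : 1 ≤ m)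
    (hmn : m ≤ n + K + 1) (v : Equiv.Perm (Fin (n + K))) (p : Fin (n + K + 1))
    (hpv : (p : ℕ) = m - 1) :
    kDescentSet (K + 1) (n + K + 1) (insertPerm p v) = ∅ ↔
      (kDescentSet (K + 1) (n + K) v = ∅ ∧ ¬ HC K (n + K) m v) := by
  rw [kDescentSet_eq_empty_iff, kDescentSet_eq_empty_iff]
  simp only [Nat.add_sub_cancel]
  have hp1 : (p : ℕ) + 1 = m := by omega
  constructor
  · intro h
    constructor
    · intro i h1 h2
      obtain ⟨j, hj, hle⟩ := h (i + 1) (by omega) (by omega)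
      refine ⟨j, hj, ?_⟩
      have e1 : i + 1 + j = (i + j) + 1 := by omega
      rw [e1] at hle
      exact (pv_ins_le_iff p v (by omega) (by omega) (by omega) (by omega)).1 hle
    · rintro ⟨hchain, hfirst⟩
      obtain ⟨j, hj, hle⟩ := h 1 le_rfl (by omega)
      rcases Nat.eq_zero_or_pos j with rfl | hj1
      · have hw1 : permVal (n + K + 1) (insertPerm p v) 1 = m := by
          rw [permVal_insertPerm_one]; omega
        have hw2 : permVal (n + K + 1) (insertPerm p v) (1 + 1) < m := by
          rw [← hp1]
          exact (pv_ins_lt_iff p v le_rfl (by omega)).2 (by omega)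
        simp only [Nat.add_zero] at hle
        omega
      · have hc := hchain j hj1 hj
        have e1 : 1 + j = j + 1 := by omega
        rw [e1] at hle
        have := (pv_ins_le_iff p v (by omega) (by omega) (by omega) (by omega)).1 hle
        omega
  · rintro ⟨hv, hnHC⟩ i h1 h2
    rcases Nat.lt_or_ge i 2 with hi | hi
    · have hi1 : i = 1 := by omega
      subst hi1
      by_cases hfirst : permVal (n + K) v 1 < m
      · have hA : ¬ (∀ j, 1 ≤ j → j < K → permVal (n + K) v (j + 1) < permVal (n + K) v j) :=
          fun hA => hnHC ⟨hA, hfirst⟩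
        push_neg at hA
        obtain ⟨j, hj1, hjK, hle⟩ := hA
        refine ⟨j, by omega, ?_⟩
        have e1 : 1 + j = j + 1 := by omega
        rw [e1]
        exact (pv_ins_le_iff p v (by omega) (by omega) (by omega) (by omega)).2 hle
      · refine ⟨0, by omega, ?_⟩
        have hw1 : permVal (n + K + 1) (insertPerm p v) 1 = m := by
          rw [permVal_insertPerm_one]; omega
        have hw2 : ¬ permVal (n + K + 1) (insertPerm p v) (1 + 1) < m := by
          rw [← hp1]
          intro hcon
          exact hfirst (by rw [← hp1]; exact (pv_ins_lt_iff p v le_rfl (by omega)).1 hcon)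
        simp only [Nat.add_zero]
        omega
    · obtain ⟨j, hj, hle⟩ := hv (i - 1) (by omega) (by omega)
      refine ⟨j, hj, ?_⟩
      have e1 : i + j = (i - 1 + j) + 1 := by omega
      rw [e1]
      exact (pv_ins_le_iff p v (by omega) (by omega) (by omega) (by omega)).2 hle



lemma stepA {K n m : ℕ} (hK : 1 ≤ K) (hn : 1 ≤ n) (hm : 1 ≤ m) (hmn : m ≤ n + K + 1) :
    fKm (K + 1) m (n + K + 1) + (BadSet K n m).card = fK (K + 1) (n + K) := by
  classical
  have hple : m - 1 < n + K + 1 := by omega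
  set p : Fin (n + K + 1) := ⟨m - 1, hple⟩ with hp
  have hpv : (p : ℕ) = m - 1 := rfl
  set T : Finset (Equiv.Perm (Fin (n + K))) :=
    Finset.univ.filter (fun v => kDescentSet (K + 1) (n + K) v = ∅) with hT
  have hsplit := Finset.card_filter_add_card_filter_not
    (s := T) (p := fun v => HC K (n + K) m v)
  have hfK : fK (K + 1) (n + K) = T.card := by
    rw [fK, dI]
  have hBad : (T.filter (fun v => HC K (n + K) m v)).card = (BadSet K n m).card :=
    congrArg Finset.card (Finset.ext fun w => by
      simp only [BadSet, hT, Finset.mem_filter, Finset.mem_univ, true_and, and_assoc])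
  have hfKm : (T.filter (fun v => ¬ HC K (n + K) m v)).card = fKm (K + 1) m (n + K + 1) := by
    rw [fKm, dIm]
    refine Finset.card_bij (fun v _ => insertPerm p v) ?_ ?_ ?_
    · intro v hv
      simp only [hT, Finset.mem_filter, Finset.mem_univ, true_and] at hv ⊢
      refine ⟨(insertPerm_av_iff hK hn hm hmn v p hpv).2 hv, ?_⟩
      rw [permVal_insertPerm_one, hpv]
      omega
    · intro a _ b _ h
      have h2 : ((p, a) : Fin (n + K + 1) × Equiv.Perm (Fin (n + K))) = (p, b) :=
        insertPerm_pair_injective h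
      exact congrArg Prod.snd h2
    · intro w hw
      simp only [Finset.mem_filter, Finset.mem_univ, true_and] at hw
      obtain ⟨q, v, rfl⟩ := exists_insertPerm w
      have hq : q = p := by
        have h1 := hw.2
        rw [permVal_insertPerm_one] at h1
        apply Fin.ext
        rw [hpv]; omega
      subst hq
      refine ⟨v, ?_, rfl⟩
      simp only [hT, Finset.mem_filter, Finset.mem_univ, true_and]
      exact (insertPerm_av_iff hK hn hm hmn v p hpv).1 hw.1
  omega

section Build

variable {n K : ℕ}

def buildFun (S : Finset (Fin (n + K))) (hS : S.card = K) (hS' : Sᶜ.card = n)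
    (t : Equiv.Perm (Fin n)) : Fin (n + K) → Fin (n + K) :=
  fun x => if h : (x : ℕ) < K then S.orderEmbOfFin hS ⟨K - 1 - (x : ℕ), by omega⟩
    else Sᶜ.orderEmbOfFin hS' (t ⟨(x : ℕ) - K, by have := x.isLt; omega⟩)

lemma buildFun_mem_lt (S : Finset (Fin (n + K))) (hS : S.card = K) (hS' : Sᶜ.card = n)
    (t : Equiv.Perm (Fin n)) {x : Fin (n + K)} (hx : (x : ℕ) < K) :
    buildFun S hS hS' t x ∈ S := by
  simp only [buildFun]
  rw [dif_pos hx]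
  exact Finset.orderEmbOfFin_mem _ _ _

lemma buildFun_mem_ge (S : Finset (Fin (n + K))) (hS : S.card = K) (hS' : Sᶜ.card = n)
    (t : Equiv.Perm (Fin n)) {x : Fin (n + K)} (hx : ¬ (x : ℕ) < K) :
    buildFun S hS hS' t x ∈ Sᶜ := by
  simp only [buildFun]
  rw [dif_neg hx]
  exact Finset.orderEmbOfFin_mem _ _ _

lemma buildFun_injective (S : Finset (Fin (n + K))) (hS : S.card = K) (hS' : Sᶜ.card = n)
    (t : Equiv.Perm (Fin n)) : Function.Injective (buildFun S hS hS' t) := by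
  intro a b hab
  by_cases ha : (a : ℕ) < K <;> by_cases hb : (b : ℕ) < K
  · simp only [buildFun] at hab
    rw [dif_pos ha, dif_pos hb] at hab
    have h1 := (S.orderEmbOfFin hS).injective hab
    have h2 : K - 1 - (a : ℕ) = K - 1 - (b : ℕ) := congrArg Fin.val h1
    exact Fin.ext (by omega)
  · exfalso
    have h1 := buildFun_mem_lt S hS hS' t ha
    have h2 := buildFun_mem_ge S hS hS' t hb
    rw [hab] at h1
    exact (Finset.mem_compl.1 h2) h1
  · exfalso
    have h1 := buildFun_mem_ge S hS hS' t ha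
    have h2 := buildFun_mem_lt S hS hS' t hb
    rw [hab] at h1
    exact (Finset.mem_compl.1 h1) h2
  · simp only [buildFun] at hab
    rw [dif_neg ha, dif_neg hb] at hab
    have h1 := t.injective ((Sᶜ.orderEmbOfFin hS').injective hab)
    have h2 : (a : ℕ) - K = (b : ℕ) - K := congrArg Fin.val h1
    exact Fin.ext (by omega)

noncomputable def buildPerm (S : Finset (Fin (n + K))) (t : Equiv.Perm (Fin n)) :
    Equiv.Perm (Fin (n + K)) :=
  if h : S.card = K then
    Equiv.ofBijective _ ((Finite.injective_iff_bijective).1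
      (buildFun_injective S h (by rw [Finset.card_compl, Fintype.card_fin, h]; omega) t))
  else 1

lemma buildPerm_apply_lt (S : Finset (Fin (n + K))) (hS : S.card = K) (hS' : Sᶜ.card = n)
    (t : Equiv.Perm (Fin n)) (x : Fin (n + K)) (hx : (x : ℕ) < K) :
    buildPerm S t x = S.orderEmbOfFin hS ⟨K - 1 - (x : ℕ), by omega⟩ := by
  rw [buildPerm, dif_pos hS]
  show buildFun S hS _ t x = _
  simp only [buildFun]
  rw [dif_pos hx]

lemma buildPerm_apply_ge (S : Finset (Fin (n + K))) (hS : S.card = K) (hS' : Sᶜ.card = n)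
    (t : Equiv.Perm (Fin n)) (x : Fin (n + K)) (hx : ¬ (x : ℕ) < K) :
    buildPerm S t x = Sᶜ.orderEmbOfFin hS'
      (t ⟨(x : ℕ) - K, by have := x.isLt; omega⟩) := by
  rw [buildPerm, dif_pos hS]
  show buildFun S hS _ t x = _
  simp only [buildFun]
  rw [dif_neg hx]

lemma pv_build_head (S : Finset (Fin (n + K))) (hS : S.card = K) (hS' : Sᶜ.card = n)
    (t : Equiv.Perm (Fin n)) {i : ℕ} (h1 : 1 ≤ i) (h2 : i ≤ K) :
    permVal (n + K) (buildPerm S t) i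
      = (S.orderEmbOfFin hS ⟨K - i, by omega⟩ : ℕ) + 1 := by
  have hin : i ≤ n + K := by omega
  rw [permVal_eq _ h1 hin, buildPerm_apply_lt S hS hS' t _ (by show i - 1 < K; omega)]
  exact congrArg (fun z : Fin K => ((S.orderEmbOfFin hS z : Fin (n + K)) : ℕ) + 1)
    (Fin.ext (by show K - 1 - (i - 1) = K - i; omega))

lemma pv_build_tail (S : Finset (Fin (n + K))) (hS : S.card = K) (hS' : Sᶜ.card = n)
    (t : Equiv.Perm (Fin n)) {i : ℕ} (h1 : K + 1 ≤ i) (h2 : i ≤ n + K) :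
    permVal (n + K) (buildPerm S t) i
      = (Sᶜ.orderEmbOfFin hS' (t ⟨i - K - 1, by omega⟩) : ℕ) + 1 := by
  rw [permVal_eq _ (by omega) h2, buildPerm_apply_ge S hS hS' t _ (by show ¬ i - 1 < K; omega)]
  exact congrArg (fun z : Fin n => ((Sᶜ.orderEmbOfFin hS' (t z) : Fin (n + K)) : ℕ) + 1)
    (Fin.ext (by show i - 1 - K = i - K - 1; omega))

end Build

section Counting

lemma card_filter_lt_val {M b : ℕ} (hb : b ≤ M) :
    (Finset.univ.filter (fun x : Fin M => (x : ℕ) < b)).card = b := by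
  classical
  have he : Finset.univ.filter (fun x : Fin M => (x : ℕ) < b)
      = Finset.attachFin (Finset.range b)
          (fun m hm => by rw [Finset.mem_range] at hm; omega) := by
    ext x
    simp [Finset.mem_attachFin, Finset.mem_range]
  rw [he, Finset.card_attachFin, Finset.card_range]

lemma card_filter_Ico_val {M a b : ℕ} (hb : b ≤ M) :
    (Finset.univ.filter (fun x : Fin M => (x : ℕ) < b ∧ a ≤ (x : ℕ))).card = b - a := by
  classical
  have he : Finset.univ.filter (fun x : Fin M => (x : ℕ) < b ∧ a ≤ (x : ℕ))
      = Finset.attachFin (Finset.Ico a b)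
          (fun m hm => by rw [Finset.mem_Ico] at hm; omega) := by
    ext x
    simp only [Finset.mem_filter, Finset.mem_univ, true_and, Finset.mem_attachFin,
      Finset.mem_Ico]
    omega
  rw [he, Finset.card_attachFin, Nat.card_Ico]

end Counting

section Ord

variable {n K : ℕ}

lemma emb_compl_le (S : Finset (Fin (n + K))) (hS' : Sᶜ.card = n) (j : Fin n)
    (h : ∀ i : ℕ, i ≤ (j : ℕ) → ∀ hi : i < n + K, (⟨i, hi⟩ : Fin (n + K)) ∈ Sᶜ) :
    ((Sᶜ.orderEmbOfFin hS') j : ℕ) ≤ (j : ℕ) := by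
  have hjn : (j : ℕ) < n + K := by have := j.isLt; omega
  set ψ := Sᶜ.orderIsoOfFin hS' with hψ
  set c : {x // x ∈ Sᶜ} := ⟨⟨(j : ℕ), hjn⟩, h (j : ℕ) le_rfl hjn⟩ with hc
  have hg : StrictMono (fun i : Fin ((j : ℕ) + 1) =>
      ψ.symm ⟨⟨(i : ℕ), by have := i.isLt; omega⟩,
        h (i : ℕ) (by have := i.isLt; omega) _⟩) := by
    intro a b hab
    apply ψ.symm.strictMono
    rw [Subtype.mk_lt_mk, Fin.lt_def]
    exact hab
  have h1 := strictMono_le_apply hg ⟨(j : ℕ), by omega⟩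
  have h2 : (j : ℕ) ≤ ((ψ.symm c : Fin n) : ℕ) := h1
  have h3 : j ≤ ψ.symm c := by rw [Fin.le_def]; exact h2
  have h4 : ψ j ≤ c := ψ.le_symm_apply.1 h3
  have h5 : ((ψ j : Fin (n + K)) : ℕ) ≤ (j : ℕ) := h4
  rwa [hψ, Finset.coe_orderIsoOfFin_apply] at h5

lemma ord_iff (hK : 1 ≤ K) (S : Finset (Fin (n + K))) (hS : S.card = K)
    (hS' : Sᶜ.card = n) (j : Fin n) :
    (∀ x ∈ S, (j : ℕ) < (x : ℕ)) ↔
      ((Sᶜ.orderEmbOfFin hS' j : ℕ) < (S.orderEmbOfFin hS ⟨0, hK⟩ : ℕ)) := by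
  constructor
  · intro h
    have h1 : ((Sᶜ.orderEmbOfFin hS') j : ℕ) ≤ (j : ℕ) := by
      apply emb_compl_le S hS' j
      intro i hi hlt
      rw [Finset.mem_compl]
      intro hmem
      exact absurd (h _ hmem) (by simp; omega)
    have h2 : (j : ℕ) < (S.orderEmbOfFin hS ⟨0, hK⟩ : ℕ) :=
      h _ (Finset.orderEmbOfFin_mem _ _ _)
    omega
  · intro h x hx
    have hrange : x ∈ Set.range (S.orderEmbOfFin hS) := by
      rw [Finset.range_orderEmbOfFin]; exact hx
    obtain ⟨i, hi⟩ := hrange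
    have hmin : (S.orderEmbOfFin hS ⟨0, hK⟩ : ℕ) ≤ (x : ℕ) := by
      rw [← hi]
      have := (S.orderEmbOfFin hS).monotone
        (show (⟨0, hK⟩ : Fin K) ≤ i from by rw [Fin.le_def]; exact Nat.zero_le _)
      exact this
    have hj := strictMono_le_apply (Sᶜ.orderEmbOfFin hS').strictMono j
    omega

end Ord

section BuildAv

variable {n K m : ℕ}

lemma emb_zero_le (hK : 1 ≤ K) (S : Finset (Fin (n + K))) (hS : S.card = K) :
    ∀ x ∈ S, (S.orderEmbOfFin hS ⟨0, hK⟩ : ℕ) ≤ (x : ℕ) := by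
  intro x hx
  have hrange : x ∈ Set.range (S.orderEmbOfFin hS) := by
    rw [Finset.range_orderEmbOfFin]; exact hx
  obtain ⟨i, hi⟩ := hrange
  rw [← hi]
  exact (S.orderEmbOfFin hS).monotone
    (show (⟨0, hK⟩ : Fin K) ≤ i from by rw [Fin.le_def]; exact Nat.zero_le _)

lemma build_av_iff (hK : 1 ≤ K) (hn : 1 ≤ n) (S : Finset (Fin (n + K)))
    (hS : S.card = K) (hS' : Sᶜ.card = n) (t : Equiv.Perm (Fin n)) :
    kDescentSet (K + 1) (n + K) (buildPerm S t) = ∅ ↔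
      (kDescentSet (K + 1) n t = ∅ ∧ ∃ x ∈ S, (x : ℕ) < permVal n t 1) := by
  have hn0 : 0 < n := hn
  set t0 : Fin n := t ⟨0, hn0⟩ with ht0
  have hpv1 : permVal n t 1 = (t0 : ℕ) + 1 := permVal_eq t le_rfl hn
  have hvK : permVal (n + K) (buildPerm S t) K
      = (S.orderEmbOfFin hS ⟨0, hK⟩ : ℕ) + 1 := by
    rw [pv_build_head S hS hS' t hK le_rfl]
    exact congrArg (fun z : Fin K => ((S.orderEmbOfFin hS z : Fin (n + K)) : ℕ) + 1)
      (Fin.ext (by show K - K = 0; omega))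
  have hvK1 : permVal (n + K) (buildPerm S t) (K + 1)
      = (Sᶜ.orderEmbOfFin hS' t0 : ℕ) + 1 := by
    rw [pv_build_tail S hS hS' t le_rfl (by omega)]
    exact congrArg (fun z : Fin n => ((Sᶜ.orderEmbOfFin hS' (t z) : Fin (n + K)) : ℕ) + 1)
      (Fin.ext (by show K + 1 - K - 1 = 0; omega))
  have htail : ∀ a : ℕ, ∀ hidx : a - 1 < n, 1 ≤ a → permVal (n + K) (buildPerm S t) (a + K)
      = (Sᶜ.orderEmbOfFin hS' (t ⟨a - 1, hidx⟩) : ℕ) + 1 := by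
    intro a hidx h1
    rw [pv_build_tail S hS hS' t (by omega) (by omega)]
    exact congrArg (fun z : Fin n => ((Sᶜ.orderEmbOfFin hS' (t z) : Fin (n + K)) : ℕ) + 1)
      (Fin.ext (by show a + K - K - 1 = a - 1; omega))
  have hcomp : ∀ a b : ℕ, 1 ≤ a → a ≤ n → 1 ≤ b → b ≤ n →
      (permVal (n + K) (buildPerm S t) (a + K) ≤ permVal (n + K) (buildPerm S t) (b + K)
        ↔ permVal n t a ≤ permVal n t b) := by
    intro a b ha1 ha2 hb1 hb2
    rw [htail a (by omega) ha1, htail b (by omega) hb1,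
      permVal_eq t ha1 ha2, permVal_eq t hb1 hb2]
    simp only [Nat.add_le_add_iff_right, ← Fin.le_def, OrderEmbedding.le_iff_le]
  rw [kDescentSet_eq_empty_iff, kDescentSet_eq_empty_iff]
  simp only [Nat.add_sub_cancel]
  constructor
  · intro h
    constructor
    · intro i h1 h2
      obtain ⟨j, hj, hle⟩ := h (i + K) (by omega) (by omega)
      have e2 : i + K + j + 1 = (i + j + 1) + K := by omega
      have e1 : i + K + j = (i + j) + K := by omega
      rw [e2, e1] at hle
      exact ⟨j, hj, (hcomp _ _ (by omega) (by omega) (by omega) (by omega)).1 hle⟩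
    · obtain ⟨j, hj, hle⟩ := h 1 le_rfl (by omega)
      rcases Nat.lt_or_ge j (K - 1) with hjlt | hjge
      · exfalso
        rw [pv_build_head S hS hS' t (i := 1 + j) (by omega) (by omega),
          pv_build_head S hS hS' t (i := 1 + j + 1) (by omega) (by omega)] at hle
        have hlt := (S.orderEmbOfFin hS).strictMono
          (show (⟨K - (1 + j + 1), by omega⟩ : Fin K) < ⟨K - (1 + j), by omega⟩ from
            by rw [Fin.lt_def]; show K - (1 + j + 1) < K - (1 + j); omega)
        rw [Fin.lt_def] at hlt
        omega
      · have hj1 : j = K - 1 := by omega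
        subst hj1
        have e1 : 1 + (K - 1) = K := by omega
        rw [e1] at hle
        rw [hvK, hvK1] at hle
        refine ⟨S.orderEmbOfFin hS ⟨0, hK⟩, Finset.orderEmbOfFin_mem _ _ _, ?_⟩
        rw [hpv1]
        by_contra hcon
        push_neg at hcon
        have hall : ∀ x ∈ S, (t0 : ℕ) < (x : ℕ) := by
          intro x hx
          have := emb_zero_le hK S hS x hx
          omega
        have := (ord_iff hK S hS hS' t0).1 hall
        omega
  · rintro ⟨ht, x, hxS, hxlt⟩ i h1 h2
    have hgood : (S.orderEmbOfFin hS ⟨0, hK⟩ : ℕ) < (Sᶜ.orderEmbOfFin hS' t0 : ℕ) + 1 := by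
      have ha := emb_zero_le hK S hS x hxS
      have hb := strictMono_le_apply (Sᶜ.orderEmbOfFin hS').strictMono t0
      rw [hpv1] at hxlt
      omega
    rcases Nat.lt_or_ge i (K + 1) with hi | hi
    · refine ⟨K - i, by omega, ?_⟩
      have e1 : i + (K - i) = K := by omega
      rw [e1, hvK, hvK1]
      omega
    · obtain ⟨j, hj, hle⟩ := ht (i - K) (by omega) (by omega)
      refine ⟨j, hj, ?_⟩
      have e2 : i + j + 1 = (i - K + j + 1) + K := by omega
      have e1 : i + j = (i - K + j) + K := by omega
      rw [e2, e1]
      exact (hcomp _ _ (by omega) (by omega) (by omega) (by omega)).2 hle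

lemma build_HC (hK : 1 ≤ K) (hm : 1 ≤ m) (S : Finset (Fin (n + K)))
    (hS : S.card = K) (hS' : Sᶜ.card = n)
    (hsub : ∀ x ∈ S, (x : ℕ) < m - 1) (t : Equiv.Perm (Fin n)) :
    HC K (n + K) m (buildPerm S t) := by
  constructor
  · intro j hj1 hjK
    rw [pv_build_head S hS hS' t (by omega) (by omega),
      pv_build_head S hS hS' t hj1 (by omega)]
    have hlt := (S.orderEmbOfFin hS).strictMono
      (show (⟨K - (j + 1), by omega⟩ : Fin K) < ⟨K - j, by omega⟩ from
        by rw [Fin.lt_def]; show K - (j + 1) < K - j; omega)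
    rw [Fin.lt_def] at hlt
    omega
  · rw [pv_build_head S hS hS' t le_rfl hK]
    have := hsub _ (Finset.orderEmbOfFin_mem S hS ⟨K - 1, by omega⟩)
    omega

end BuildAv

section StepB

variable {n K m : ℕ}

lemma aux_lt_add {n K : ℕ} (i : Fin n) : K + (i : ℕ) < n + K := by omega

lemma aux_val_lt {n K : ℕ} (j : Fin K) : (j : ℕ) < n + K := by omega

lemma aux_sub_lt {n K : ℕ} (j : Fin K) : K - 1 - (j : ℕ) < n + K := by omega

lemma aux_sub_lt' {K a : ℕ} (h : a < K) : K - 1 - a < K := by omega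

lemma aux_sub_lt'' {K : ℕ} (j : Fin K) : K - 1 - (j : ℕ) < K := by omega

lemma aux_pos {n : ℕ} (K : ℕ) (hn : 1 ≤ n) : 0 < n + K := by omega

lemma HC_chain (v : Equiv.Perm (Fin (n + K))) (hv : HC K (n + K) m v) :
    ∀ b a : ℕ, a < b → b < K → ∀ (hb : b < n + K) (ha : a < n + K),
      v ⟨b, hb⟩ < v ⟨a, ha⟩ := by
  intro b
  induction b with
  | zero => intro a h; omega
  | succ c ih =>
    intro a hab hbK hb ha
    have hc : c < n + K := by omega
    have hadj : v ⟨c + 1, hb⟩ < v ⟨c, hc⟩ := by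
      have h0 := hv.1 (c + 1) (by omega) (by omega)
      rw [permVal_eq _ (by omega) (by omega), permVal_eq _ (by omega) (by omega)] at h0
      have h1 : (v ⟨c + 1, hb⟩ : ℕ) + 1 < (v ⟨c, hc⟩ : ℕ) + 1 := h0
      rw [Fin.lt_def]; omega
    rcases Nat.lt_or_ge a c with h | h
    · exact lt_trans hadj (ih a h (by omega) hc ha)
    · have haeq : a = c := by omega
      subst haeq
      exact hadj

open scoped Classical in
noncomputable def SetsOf (K n m : ℕ) (t : Equiv.Perm (Fin n)) :
    Finset (Finset (Fin (n + K))) :=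
  ((Finset.univ.filter (fun x : Fin (n + K) => (x : ℕ) < m - 1)).powersetCard K).filter
    (fun S => ∃ x ∈ S, (x : ℕ) < permVal n t 1)

lemma buildPerm_image (hK : 1 ≤ K) (S : Finset (Fin (n + K))) (hS : S.card = K)
    (hS' : Sᶜ.card = n) (t : Equiv.Perm (Fin n)) :
    Finset.image (fun j : Fin K =>
      buildPerm S t ⟨(j : ℕ), by have := j.isLt; omega⟩) Finset.univ = S := by
  apply Finset.ext
  intro x
  simp only [Finset.mem_image, Finset.mem_univ, true_and]
  constructor
  · rintro ⟨j, rfl⟩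
    rw [buildPerm_apply_lt S hS hS' t _ (by show (j : ℕ) < K; exact j.isLt)]
    exact Finset.orderEmbOfFin_mem _ _ _
  · intro hx
    obtain ⟨i, hi⟩ : ∃ i, S.orderEmbOfFin hS i = x := by
      have : x ∈ Set.range (S.orderEmbOfFin hS) := by
        rw [Finset.range_orderEmbOfFin]; exact hx
      exact this
    refine ⟨⟨K - 1 - (i : ℕ), by have := i.isLt; omega⟩, ?_⟩
    rw [buildPerm_apply_lt S hS hS' t _ (by show K - 1 - (i : ℕ) < K; have := i.isLt; omega)]
    rw [← hi]
    exact congrArg (S.orderEmbOfFin hS)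
      (Fin.ext (by show K - 1 - (K - 1 - (i : ℕ)) = (i : ℕ); have := i.isLt; omega))

lemma build_inj (hK : 1 ≤ K) (S S' : Finset (Fin (n + K))) (hS : S.card = K)
    (hS2 : S'.card = K) (hc : Sᶜ.card = n) (hc2 : S'ᶜ.card = n)
    (t t' : Equiv.Perm (Fin n)) (h : buildPerm S t = buildPerm S' t') :
    S = S' ∧ t = t' := by
  have hSS : S = S' := by
    calc S = Finset.image (fun j : Fin K =>
          buildPerm S t ⟨(j : ℕ), by have := j.isLt; omega⟩) Finset.univ :=
        (buildPerm_image hK S hS hc t).symm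
      _ = Finset.image (fun j : Fin K =>
          buildPerm S' t' ⟨(j : ℕ), by have := j.isLt; omega⟩) Finset.univ := by rw [h]
      _ = S' := buildPerm_image hK S' hS2 hc2 t'
  subst hSS
  refine ⟨rfl, ?_⟩
  apply Equiv.ext
  intro i
  have hv := Equiv.ext_iff.1 h ⟨K + (i : ℕ), by have := i.isLt; omega⟩
  rw [buildPerm_apply_ge S hS hc t _ (by show ¬ K + (i : ℕ) < K; omega),
    buildPerm_apply_ge S hS hc t' _ (by show ¬ K + (i : ℕ) < K; omega)] at hv
  have hv2 := (Sᶜ.orderEmbOfFin hc).injective hv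
  have he : (⟨K + (i : ℕ) - K, by have := i.isLt; omega⟩ : Fin n) = i :=
    Fin.ext (by show K + (i : ℕ) - K = (i : ℕ); omega)
  have hfin : t i = t' i := by rw [← he]; exact hv2
  exact hfin

lemma stepB (hK : 1 ≤ K) (hn : 1 ≤ n) (hm : 1 ≤ m) (hmn : m ≤ n + K + 1) :
    (BadSet K n m).card
      = ∑ u ∈ Finset.Icc 1 n,
          fKm (K + 1) u n * (Nat.choose (m - 1) K - Nat.choose (m - 1 - u) K) := by
  classical
  have hcompl : ∀ S : Finset (Fin (n + K)), S.card = K → Sᶜ.card = n := fun S h => by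
    rw [Finset.card_compl, Fintype.card_fin, h]; omega
  set T : Finset (Equiv.Perm (Fin n)) :=
    Finset.univ.filter (fun t => kDescentSet (K + 1) n t = ∅) with hT
  have h1 : (T.sigma (fun t => SetsOf K n m t)).card = (BadSet K n m).card := by
    refine Finset.card_bij (fun a _ => buildPerm a.2 a.1) ?_ ?_ ?_
    · rintro ⟨t, S⟩ ha
      rw [Finset.mem_sigma] at ha
      obtain ⟨ht, hSmem⟩ := ha
      rw [hT, Finset.mem_filter] at ht
      have hSmem' := hSmem
      rw [SetsOf, Finset.mem_filter, Finset.mem_powersetCard] at hSmem'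
      obtain ⟨⟨hsub, hcard⟩, hex⟩ := hSmem'
      have hsub' : ∀ x ∈ S, (x : ℕ) < m - 1 := fun x hx => by
        have := hsub hx; rw [Finset.mem_filter] at this; exact this.2
      rw [BadSet, Finset.mem_filter]
      exact ⟨Finset.mem_univ _,
        (build_av_iff hK hn S hcard (hcompl S hcard) t).2 ⟨ht.2, hex⟩,
        build_HC hK hm S hcard (hcompl S hcard) hsub' t⟩
    · rintro ⟨t, S⟩ ha ⟨t', S'⟩ hb h
      rw [Finset.mem_sigma] at ha hb
      have hScard : S.card = K := by
        have := ha.2; rw [SetsOf, Finset.mem_filter, Finset.mem_powersetCard] at this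
        exact this.1.2
      have hScard' : S'.card = K := by
        have := hb.2; rw [SetsOf, Finset.mem_filter, Finset.mem_powersetCard] at this
        exact this.1.2
      obtain ⟨hSS, htt⟩ := build_inj hK S S' hScard hScard'
        (hcompl S hScard) (hcompl S' hScard') t t' h
      subst hSS; subst htt
      rfl
    · intro w hw
      rw [BadSet, Finset.mem_filter] at hw
      obtain ⟨-, hAv, hHC⟩ := hw
      have hwchain := HC_chain w hHC
      obtain ⟨S, hSdef⟩ : ∃ S : Finset (Fin (n + K)), S = Finset.image
          (fun j : Fin K => w ⟨(j : ℕ), aux_val_lt j⟩) Finset.univ := ⟨_, rfl⟩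
      have hS : S.card = K := by
        rw [hSdef, Finset.card_image_of_injective _ ?inj, Finset.card_univ, Fintype.card_fin]
        case inj =>
          intro a b hab
          have h1 := congrArg Fin.val (w.injective hab)
          exact Fin.ext h1
      have hSc : Sᶜ.card = n := hcompl S hS
      have hmemC : ∀ i : Fin n, w ⟨K + (i : ℕ), aux_lt_add i⟩ ∈ Sᶜ := by
        intro i
        rw [Finset.mem_compl, hSdef, Finset.mem_image]
        rintro ⟨j, -, hj⟩
        have h1 := congrArg Fin.val (w.injective hj)
        have h1' : (j : ℕ) = K + (i : ℕ) := h1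
        have := j.isLt
        omega
      have hginj : Function.Injective (fun i : Fin n =>
          (Sᶜ.orderIsoOfFin hSc).symm ⟨w ⟨K + (i : ℕ), aux_lt_add i⟩, hmemC i⟩) := by
        intro a b hab
        have h1 := congrArg (Sᶜ.orderIsoOfFin hSc) hab
        rw [OrderIso.apply_symm_apply, OrderIso.apply_symm_apply] at h1
        have h2 := congrArg Subtype.val h1
        have h3 := congrArg Fin.val (w.injective h2)
        have h3' : K + (a : ℕ) = K + (b : ℕ) := h3
        exact Fin.ext (by omega)
      obtain ⟨t, htdef⟩ : ∃ t : Equiv.Perm (Fin n), ∀ i : Fin n, t i =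
          (Sᶜ.orderIsoOfFin hSc).symm
            ⟨w ⟨K + (i : ℕ), aux_lt_add i⟩, hmemC i⟩ :=
        ⟨Equiv.ofBijective _ ((Finite.injective_iff_bijective).1 hginj), fun i => rfl⟩
      have htapp : ∀ i : Fin n, Sᶜ.orderEmbOfFin hSc (t i)
          = w ⟨K + (i : ℕ), aux_lt_add i⟩ := by
        intro i
        rw [htdef i, ← Finset.coe_orderIsoOfFin_apply, OrderIso.apply_symm_apply]
      have hbw : buildPerm S t = w := by
        apply Equiv.ext
        intro x
        by_cases hx : (x : ℕ) < K
        · rw [buildPerm_apply_lt S hS hSc t x hx]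
          have hmemf : ∀ j : Fin K, (fun j : Fin K =>
              w ⟨K - 1 - (j : ℕ), aux_sub_lt j⟩) j ∈ S := by
            intro j
            rw [hSdef]
            exact Finset.mem_image.2 ⟨⟨K - 1 - (j : ℕ), aux_sub_lt'' j⟩,
              Finset.mem_univ _, congrArg w (Fin.ext rfl)⟩
          have hmono : StrictMono (fun j : Fin K =>
              w ⟨K - 1 - (j : ℕ), aux_sub_lt j⟩) := by
            intro a b hab
            have hb := b.isLt
            have ha := a.isLt
            rw [Fin.lt_def] at hab
            exact hwchain (K - 1 - (a : ℕ)) (K - 1 - (b : ℕ)) (by omega) (by omega) _ _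
          have huniq := Finset.orderEmbOfFin_unique hS hmemf hmono
          have h5 := congrFun huniq (⟨K - 1 - (x : ℕ), aux_sub_lt' hx⟩ : Fin K)
          refine h5.symm.trans ?_
          exact congrArg w (Fin.ext (by show K - 1 - (K - 1 - (x : ℕ)) = (x : ℕ); omega))
        · rw [buildPerm_apply_ge S hS hSc t x hx]
          rw [htapp]
          exact congrArg w (Fin.ext (by show K + ((x : ℕ) - K) = (x : ℕ); omega))
      have hAvt := (build_av_iff hK hn S hS hSc t).1 (by rw [hbw]; exact hAv)
      have hsubA : ∀ x ∈ S, (x : ℕ) < m - 1 := by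
        intro x hx
        rw [hSdef, Finset.mem_image] at hx
        obtain ⟨j, -, rfl⟩ := hx
        have hj := j.isLt
        have h0 : (w ⟨0, aux_pos K hn⟩ : ℕ) + 1 < m := by
          have hh := hHC.2
          rw [permVal_eq _ le_rfl (by omega)] at hh
          exact hh
        rcases Nat.eq_zero_or_pos (j : ℕ) with hj0 | hj0
        · have heq : (⟨(j : ℕ), aux_val_lt j⟩ : Fin (n + K)) = ⟨0, aux_pos K hn⟩ :=
            Fin.ext (by simpa using hj0)
          rw [heq]
          omega
        · have hlt := hwchain (j : ℕ) 0 hj0 (by omega) (aux_val_lt j) (aux_pos K hn)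
          rw [Fin.lt_def] at hlt
          omega
      refine ⟨⟨t, S⟩, ?_, hbw⟩
      rw [Finset.mem_sigma]
      constructor
      · rw [hT, Finset.mem_filter]
        exact ⟨Finset.mem_univ _, hAvt.1⟩
      · rw [SetsOf, Finset.mem_filter, Finset.mem_powersetCard]
        exact ⟨⟨fun x hx => Finset.mem_filter.2 ⟨Finset.mem_univ _, hsubA x hx⟩, hS⟩, hAvt.2⟩
  have h2 : ∀ t : Equiv.Perm (Fin n), (SetsOf K n m t).card
      = Nat.choose (m - 1) K - Nat.choose (m - 1 - permVal n t 1) K := by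
    intro t
    set A : Finset (Fin (n + K)) :=
      Finset.univ.filter (fun x : Fin (n + K) => (x : ℕ) < m - 1) with hA
    have hAcard : A.card = m - 1 := card_filter_lt_val (by omega)
    have hsplit := Finset.card_filter_add_card_filter_not
      (s := A.powersetCard K)
      (p := fun S : Finset (Fin (n + K)) => ∀ x ∈ S, ¬ (x : ℕ) < permVal n t 1)
    have e1 : ((A.powersetCard K).filter
        (fun S : Finset (Fin (n + K)) => ¬ ∀ x ∈ S, ¬ (x : ℕ) < permVal n t 1)).card
        = (SetsOf K n m t).card := by
      apply congrArg Finset.card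
      ext S
      rw [SetsOf]
      simp only [Finset.mem_filter]
      constructor
      · rintro ⟨hp, hq⟩
        push_neg at hq
        exact ⟨hp, hq⟩
      · rintro ⟨hp, hq⟩
        refine ⟨hp, ?_⟩
        push_neg
        exact hq
    have e2 : (A.powersetCard K).filter
        (fun S : Finset (Fin (n + K)) => ∀ x ∈ S, ¬ (x : ℕ) < permVal n t 1)
        = (A.filter (fun x : Fin (n + K) => ¬ (x : ℕ) < permVal n t 1)).powersetCard K := by
      ext S
      simp only [Finset.mem_filter, Finset.mem_powersetCard]
      constructor
      · rintro ⟨⟨hsub, hc⟩, hall⟩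
        exact ⟨fun x hx => Finset.mem_filter.2 ⟨hsub hx, hall x hx⟩, hc⟩
      · rintro ⟨hsub, hc⟩
        exact ⟨⟨fun x hx => (Finset.mem_filter.1 (hsub hx)).1, hc⟩,
          fun x hx => (Finset.mem_filter.1 (hsub hx)).2⟩
    have hA2card : (A.filter (fun x : Fin (n + K) => ¬ (x : ℕ) < permVal n t 1)).card
        = (m - 1) - permVal n t 1 := by
      rw [hA, Finset.filter_filter]
      rw [← card_filter_Ico_val (M := n + K) (a := permVal n t 1) (b := m - 1) (by omega)]
      apply congrArg Finset.card
      apply Finset.filter_congr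
      intro x _
      simp [not_lt]
    have hpcK : (A.powersetCard K).card = Nat.choose (m - 1) K := by
      rw [Finset.card_powersetCard, hAcard]
    have hforall : ((A.powersetCard K).filter
        (fun S : Finset (Fin (n + K)) => ∀ x ∈ S, ¬ (x : ℕ) < permVal n t 1)).card
        = Nat.choose (m - 1 - permVal n t 1) K := by
      rw [e2, Finset.card_powersetCard, hA2card]
    omega
  rw [← h1, Finset.card_sigma]
  have hmaps : ∀ t ∈ T, permVal n t 1 ∈ Finset.Icc 1 n := by
    intro t _
    rw [permVal_eq t le_rfl hn, Finset.mem_Icc]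
    have := (t ⟨1 - 1, by omega⟩).isLt
    omega
  rw [← Finset.sum_fiberwise_of_maps_to hmaps (fun t => (SetsOf K n m t).card)]
  apply Finset.sum_congr rfl
  intro u hu
  have hconst : ∀ t ∈ T.filter (fun t => permVal n t 1 = u),
      (SetsOf K n m t).card = Nat.choose (m - 1) K - Nat.choose (m - 1 - u) K := by
    intro t ht
    rw [h2 t, (Finset.mem_filter.1 ht).2]
  rw [Finset.sum_congr rfl hconst, Finset.sum_const, smul_eq_mul]
  congr 1
  rw [fKm, dIm]
  apply congrArg Finset.card
  ext t
  simp only [hT, Finset.filter_filter, Finset.mem_filter, Finset.mem_univ, true_and]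

end StepB


/-- Proposition: recurrence for `f_k(m, n+k)`.
For `k ≥ 2`, `n ≥ 1` and `1 ≤ m ≤ n + k`,
`f_k(m, n+k) = f_k(n+k-1) - ( Σ_{u=1}^{n} f_k(u,n)·C(m-1,k-1)
  - Σ_{u=1}^{min(m-1,n)} f_k(u,n)·C(m-1-u,k-1) )`. -/
theorem fKm_recurrence (k n m : ℕ) (hk : 2 ≤ k) (hn : 1 ≤ n)
    (hm : 1 ≤ m) (hmn : m ≤ n + k) :
    (fKm k m (n + k) : ℤ) =
      (fK k (n + k - 1) : ℤ) -
        ((∑ u ∈ Finset.Icc 1 n,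
            (fKm k u n : ℤ) * (Nat.choose (m - 1) (k - 1) : ℤ)) -
         (∑ u ∈ Finset.Icc 1 (min (m - 1) n),
            (fKm k u n : ℤ) * (Nat.choose (m - 1 - u) (k - 1) : ℤ))) := by
  obtain ⟨K, rfl⟩ : ∃ K, k = K + 1 := ⟨k - 1, by omega⟩
  have hK : 1 ≤ K := by omega
  rw [show n + (K + 1) - 1 = n + K from by omega, ← Nat.add_assoc, Nat.add_sub_cancel]
  have hA := stepA hK hn hm (by omega)
  have hB := stepB hK hn hm (by omega)
  have hsum2 : (∑ u ∈ Finset.Icc 1 (min (m - 1) n),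
        (fKm (K + 1) u n : ℤ) * (Nat.choose (m - 1 - u) K : ℤ))
      = ∑ u ∈ Finset.Icc 1 n,
        (fKm (K + 1) u n : ℤ) * (Nat.choose (m - 1 - u) K : ℤ) := by
    apply Finset.sum_subset
    · exact Finset.Icc_subset_Icc le_rfl (min_le_right _ _)
    · intro u hu hnu
      rw [Finset.mem_Icc] at hu
      rw [Finset.mem_Icc] at hnu
      have hgt : m - 1 < u := by omega
      rw [show m - 1 - u = 0 from by omega, Nat.choose_eq_zero_of_lt hK]
      simp
  have hBZ : ((BadSet K n m).card : ℤ)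
      = (∑ u ∈ Finset.Icc 1 n, (fKm (K + 1) u n : ℤ) * (Nat.choose (m - 1) K : ℤ))
        - ∑ u ∈ Finset.Icc 1 n, (fKm (K + 1) u n : ℤ) * (Nat.choose (m - 1 - u) K : ℤ) := by
    rw [hB, Nat.cast_sum, ← Finset.sum_sub_distrib]
    apply Finset.sum_congr rfl
    intro u hu
    have hle : Nat.choose (m - 1 - u) K ≤ Nat.choose (m - 1) K :=
      Nat.choose_le_choose K (by omega)
    rw [Nat.cast_mul, Nat.cast_sub hle]
    ring
  have hAZ : (fKm (K + 1) m (n + K + 1) : ℤ) + ((BadSet K n m).card : ℤ)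
      = (fK (K + 1) (n + K) : ℤ) := by exact_mod_cast hA
  rw [hsum2]
  linarith [hAZ, hBZ]
end

section
/- For all integers k ≥ 2, n ≥ 1 and m with 1 ≤ m ≤ n, the k-th finite difference of the sequence (f_k(1,n+k), f_k(2,n+k), ..., f_k(n+k,n+k)) equals the sequence (f_k(1,n), ..., f_k(n,n)); explicitly, Σ_{i=0}^{k} (-1)^{k-i}·C(k,i)·f_k(m+i, n+k) = f_k(m, n). -/
open Finset Equiv

namespace KD

/-- classical count of elements satisfying `P`. -/
noncomputable def cnt {α : Type*} [Fintype α] (P : α → Prop) : ℕ :=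
  @Finset.card _ (@Finset.filter _ P (Classical.decPred P) Finset.univ)

lemma card_filter_congr' {α : Type*} {p q : α → Prop} (h1 : DecidablePred p)
    (h2 : DecidablePred q) (s : Finset α) (h : ∀ a, p a ↔ q a) :
    (@Finset.filter _ p h1 s).card = (@Finset.filter _ q h2 s).card := by
  classical
  congr 1
  rw [Finset.filter_congr_decidable, Finset.filter_congr_decidable]
  exact Finset.filter_congr (fun x _ => h x)

lemma cnt_congr {α : Type*} [Fintype α] {P Q : α → Prop} (h : ∀ a, P a ↔ Q a) :
    cnt P = cnt Q := by
  unfold cnt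
  exact card_filter_congr' _ _ _ h

lemma cnt_eq_card {α : Type*} [Fintype α] (P : α → Prop) [DecidablePred P] :
    (Finset.univ.filter P).card = cnt P := by
  unfold cnt
  exact card_filter_congr' _ _ _ (fun _ => Iff.rfl)

lemma cnt_split {α : Type*} [Fintype α] (A B : α → Prop) :
    cnt A = cnt (fun a => A a ∧ B a) + cnt (fun a => A a ∧ ¬ B a) := by
  classical
  unfold cnt
  rw [← Finset.card_filter_add_card_filter_not
    (s := @Finset.filter _ A (Classical.decPred A) Finset.univ) (p := B)]
  congr 1
  · rw [Finset.filter_filter]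
    exact card_filter_congr' _ _ _ (fun _ => Iff.rfl)
  · rw [Finset.filter_filter]
    exact card_filter_congr' _ _ _ (fun _ => Iff.rfl)

/-- Insert `p` as first value of the permutation `v`. -/
def Φ {M : ℕ} (p : Fin (M+1)) (v : Equiv.Perm (Fin M)) : Equiv.Perm (Fin (M+1)) :=
  (finSuccEquiv M).trans ((Equiv.optionCongr v).trans (finSuccEquiv' p).symm)

variable {M : ℕ} (p : Fin (M+1)) (v : Equiv.Perm (Fin M))

@[simp] lemma Φ_zero : Φ p v 0 = p := by
  simp [Φ, finSuccEquiv_zero, finSuccEquiv'_symm_none]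

@[simp] lemma Φ_succ (i : Fin M) : Φ p v i.succ = p.succAbove (v i) := by
  simp [Φ, finSuccEquiv_succ, finSuccEquiv'_symm_some]

lemma Φ_injective : Function.Injective (Φ p) := by
  intro v v' h
  ext i
  have := congrArg (fun w : Equiv.Perm (Fin (M+1)) => w i.succ) h
  simp only [Φ_succ] at this
  have := Fin.succAbove_right_injective (p := p) this
  simp [this]

def Ψ (p : Fin (M+1)) (w : Equiv.Perm (Fin (M+1))) : Equiv.Perm (Fin M) :=
  Equiv.removeNone (((finSuccEquiv M).symm.trans w).trans (finSuccEquiv' p))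

lemma Φ_Ψ (w : Equiv.Perm (Fin (M+1))) (hw : w 0 = p) : Φ p (Ψ p w) = w := by
  ext i
  induction i using Fin.cases with
  | zero => simp [hw]
  | succ i =>
    rw [Φ_succ]
    set e := ((finSuccEquiv M).symm.trans w).trans (finSuccEquiv' p) with he
    have hne : w i.succ ≠ p := by
      intro h
      have : (i.succ : Fin (M+1)) = 0 := w.injective (by rw [h, hw])
      exact (Fin.succ_ne_zero i) this
    obtain ⟨j, hj⟩ : ∃ j, w i.succ = p.succAbove j := by
      rcases Fin.exists_succAbove_eq hne with ⟨j, hj⟩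
      exact ⟨j, hj.symm⟩
    have hes : e (some i) = some j := by
      simp only [he, Equiv.trans_apply, Equiv.symm_apply_eq]
      rw [show (finSuccEquiv M).symm (some i) = i.succ by
        rw [Equiv.symm_apply_eq, finSuccEquiv_succ]]
      rw [hj, show (finSuccEquiv' p) (p.succAbove j) = some j by
        rw [← finSuccEquiv'_symm_some, Equiv.apply_symm_apply]]
    have : some (Ψ p w i) = e (some i) := Equiv.removeNone_some e ⟨j, hes⟩
    rw [hes] at this
    have : Ψ p w i = j := Option.some_injective _ this
    rw [this, ← hj]

lemma permVal_eq {N : ℕ} (w : Equiv.Perm (Fin N)) (i : ℕ) (h1 : 1 ≤ i) (h2 : i ≤ N) :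
    permVal N w i = (w ⟨i - 1, by omega⟩ : ℕ) + 1 := by
  unfold permVal
  rw [dif_pos]

lemma pv_Φ_one : permVal (M+1) (Φ p v) 1 = (p : ℕ) + 1 := by
  rw [permVal_eq _ 1 le_rfl (by omega)]
  rw [show (⟨1-1, by omega⟩ : Fin (M+1)) = 0 from rfl, Φ_zero]

lemma pv_Φ (a : ℕ) (h1 : 1 ≤ a) (h2 : a ≤ M) :
    permVal (M+1) (Φ p v) (a+1) = (p.succAbove (v ⟨a-1, by omega⟩) : ℕ) + 1 := by
  rw [permVal_eq _ (a+1) (by omega) (by omega)]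
  congr 1
  rw [show (⟨a + 1 - 1, by omega⟩ : Fin (M+1)) = Fin.succ ⟨a-1, by omega⟩ by
    apply Fin.ext; simp; omega]
  rw [Φ_succ]

lemma pv_v (a : ℕ) (h1 : 1 ≤ a) (h2 : a ≤ M) :
    permVal M v a = (v ⟨a-1, by omega⟩ : ℕ) + 1 := permVal_eq v a h1 h2

lemma comp0 (hM : 1 ≤ M) :
    (permVal (M+1) (Φ p v) 2 < permVal (M+1) (Φ p v) 1 ↔ permVal M v 1 ≤ (p : ℕ)) := by
  rw [pv_Φ_one, show (2:ℕ) = 1 + 1 from rfl, pv_Φ p v 1 le_rfl hM, pv_v v 1 le_rfl hM]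
  have h5 : ∀ x : Fin M, ((p.succAbove x : ℕ) + 1 < (p:ℕ) + 1 ↔ (x:ℕ) + 1 ≤ (p:ℕ)) := by
    intro x
    simp only [Nat.add_lt_add_iff_right]
    rw [show ((p.succAbove x : ℕ) < (p:ℕ)) ↔ p.succAbove x < p from Iff.rfl,
        Fin.succAbove_lt_iff_castSucc_lt, Fin.lt_def]
    simp only [Fin.coe_castSucc]
    omega
  exact h5 _

lemma compS (a : ℕ) (h1 : 1 ≤ a) (h2 : a + 1 ≤ M) :
    (permVal (M+1) (Φ p v) (a+2) < permVal (M+1) (Φ p v) (a+1) ↔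
      permVal M v (a+1) < permVal M v a) := by
  rw [show a + 2 = (a+1) + 1 from rfl, pv_Φ p v (a+1) (by omega) h2,
    pv_Φ p v a h1 (by omega), pv_v v (a+1) (by omega) h2, pv_v v a h1 (by omega)]
  have h5 : ∀ x y : Fin M, ((p.succAbove x : ℕ) + 1 < (p.succAbove y : ℕ) + 1 ↔ (x:ℕ)+1 < (y:ℕ)+1) := by
    intro x y
    simp only [Nat.add_lt_add_iff_right]
    rw [show (p.succAbove x : ℕ) < (p.succAbove y : ℕ) ↔ p.succAbove x < p.succAbove y from Iff.rfl,
      Fin.succAbove_lt_succAbove_iff, Fin.lt_def]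
  exact h5 _ _

/-- initial decreasing run `w(1) > w(2) > ⋯ > w(r)` (needs `r ≤ N` to fit). -/
def Ini (r N : ℕ) (w : Equiv.Perm (Fin N)) : Prop :=
  r ≤ N ∧ ∀ j, j + 2 ≤ r → permVal N w (j + 2) < permVal N w (j + 1)

/-- there is a `k`-descent somewhere. -/
def HasRun (k N : ℕ) (w : Equiv.Perm (Fin N)) : Prop :=
  ∃ i, 1 ≤ i ∧ i + k ≤ N + 1 ∧ ∀ j, j + 2 ≤ k → permVal N w (i + j + 1) < permVal N w (i + j)

lemma Ini.mono {r r' N : ℕ} {w : Equiv.Perm (Fin N)} (h : Ini r N w) (hr : r' ≤ r) :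
    Ini r' N w :=
  ⟨le_trans hr h.1, fun j hj => h.2 j (by omega)⟩

lemma av_iff {k N : ℕ} (w : Equiv.Perm (Fin N)) :
    kDescentSet k N w = ∅ ↔ ¬ HasRun k N w := by
  rw [Finset.eq_empty_iff_forall_notMem]
  constructor
  · rintro h ⟨i, h1, h2, hc⟩
    refine h i ?_
    rw [kDescentSet, Finset.mem_filter, Finset.mem_Icc]
    exact ⟨⟨h1, by omega⟩, fun j hj => hc j (by omega)⟩
  · intro h i hi
    rw [kDescentSet, Finset.mem_filter, Finset.mem_Icc] at hi
    exact h ⟨i, hi.1.1, by omega, fun j hj => hi.2 j (by omega)⟩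

lemma Ini_Φ (hM : 1 ≤ M) (r : ℕ) (hr : 2 ≤ r) :
    Ini r (M+1) (Φ p v) ↔ (permVal M v 1 ≤ (p:ℕ) ∧ Ini (r-1) M v) := by
  constructor
  · rintro ⟨hrN, hc⟩
    refine ⟨(comp0 p v hM).1 (hc 0 (by omega)), by omega, fun j hj => ?_⟩
    have h2 := hc (j+1) (by omega)
    rw [show j + 1 + 2 = (j+1) + 2 from rfl, show j + 1 + 1 = (j+1) + 1 from rfl] at h2
    exact (compS p v (j+1) (by omega) (by omega)).1 h2
  · rintro ⟨h0, hr1, hc⟩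
    refine ⟨by omega, fun j hj => ?_⟩
    rcases Nat.eq_zero_or_pos j with rfl | hjpos
    · exact (comp0 p v hM).2 h0
    · have h2 := hc (j-1) (by omega)
      rw [show j - 1 + 2 = j + 1 from by omega, show j - 1 + 1 = j from by omega] at h2
      exact (compS p v j (by omega) (by omega)).2 h2

lemma HasRun_Φ (hM : 1 ≤ M) {k : ℕ} (hk : 2 ≤ k) :
    HasRun k (M+1) (Φ p v) ↔
      HasRun k M v ∨ (permVal M v 1 ≤ (p:ℕ) ∧ Ini (k-1) M v) := by
  constructor
  · rintro ⟨i, h1, h2, hc⟩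
    rcases eq_or_lt_of_le h1 with rfl | hi2
    · right
      have : Ini k (M+1) (Φ p v) := by
        refine ⟨by omega, fun j hj => ?_⟩
        have := hc j hj
        rw [show 1 + j + 1 = j + 2 from by omega, show 1 + j = j + 1 from by omega] at this
        exact this
      exact (Ini_Φ p v hM k hk).1 this
    · left
      refine ⟨i - 1, by omega, by omega, fun j hj => ?_⟩
      have h3 := hc j hj
      rw [show i + j + 1 = ((i + j - 1) + 1) + 1 from by omega,
        show i + j = (i + j - 1) + 1 from by omega] at h3
      have h4 := (compS p v (i + j - 1) (by omega) (by omega)).1 (by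
        rw [show (i+j-1) + 2 = ((i+j-1)+1)+1 from rfl]; exact h3)
      rw [show i - 1 + j + 1 = (i + j - 1) + 1 from by omega,
        show i - 1 + j = i + j - 1 from by omega]
      exact h4
  · rintro (⟨i, h1, h2, hc⟩ | hini)
    · refine ⟨i + 1, by omega, by omega, fun j hj => ?_⟩
      have h4 := (compS p v (i + j) (by omega) (by omega)).2 (hc j hj)
      rw [show i + 1 + j + 1 = (i + j) + 2 from by omega,
        show i + 1 + j = (i + j) + 1 from by omega]
      exact h4
    · have hini2 := (Ini_Φ p v hM k hk).2 hini
      have hkM : k - 1 ≤ M := hini.2.1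
      refine ⟨1, le_rfl, by omega, fun j hj => ?_⟩
      have := hini2.2 j hj
      rw [show 1 + j + 1 = j + 2 from by omega, show 1 + j = j + 1 from by omega]
      exact this

noncomputable def G (k r m N : ℕ) : ℕ :=
  cnt (fun w : Equiv.Perm (Fin N) => ¬ HasRun k N w ∧ permVal N w 1 = m ∧ Ini r N w)

lemma card_eq_insert (p : Fin (M+1)) (P : Equiv.Perm (Fin (M+1)) → Prop)
    (Q : Equiv.Perm (Fin M) → Prop) (h : ∀ v, P (Φ p v) ↔ Q v) :
    cnt (fun w => w 0 = p ∧ P w) = cnt Q := by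
  unfold cnt
  symm
  apply Finset.card_bij (fun (v : Equiv.Perm (Fin M)) _ => Φ p v)
  · intro v hv
    simp only [Finset.mem_filter, Finset.mem_univ, true_and] at hv ⊢
    exact ⟨Φ_zero p v, (h v).2 hv⟩
  · intro v1 h1 v2 h2 hv
    exact Φ_injective p hv
  · intro w hw
    simp only [Finset.mem_filter, Finset.mem_univ, true_and] at hw
    refine ⟨Ψ p w, ?_, Φ_Ψ p w hw.1⟩
    simp only [Finset.mem_filter, Finset.mem_univ, true_and]
    have h2 := hw.2
    rw [← Φ_Ψ p w hw.1] at h2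
    exact (h _).1 h2

lemma abstract_diff {α : Type*} [Fintype α] (A : α → Prop) (pv : α → ℕ) (I : α → Prop)
    (m : ℕ) (hm : 1 ≤ m) :
    (cnt (fun a => A a ∧ ¬ (pv a ≤ m - 1 ∧ I a)) : ℤ)
      - cnt (fun a => A a ∧ ¬ (pv a ≤ m ∧ I a))
      = cnt (fun a => A a ∧ pv a = m ∧ I a) := by
  have s1 := cnt_split A (fun a => pv a ≤ m - 1 ∧ I a)
  have s2 := cnt_split A (fun a => pv a ≤ m ∧ I a)
  have s3 := cnt_split (fun a => A a ∧ pv a ≤ m ∧ I a) (fun a => pv a ≤ m - 1)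
  have e1 : cnt (fun a => (A a ∧ pv a ≤ m ∧ I a) ∧ pv a ≤ m - 1)
      = cnt (fun a => A a ∧ pv a ≤ m - 1 ∧ I a) := by
    apply cnt_congr
    intro a
    constructor
    · rintro ⟨⟨hA, h1, hI⟩, h2⟩; exact ⟨hA, h2, hI⟩
    · rintro ⟨hA, h2, hI⟩; exact ⟨⟨hA, by omega, hI⟩, h2⟩
  have e2 : cnt (fun a => (A a ∧ pv a ≤ m ∧ I a) ∧ ¬ pv a ≤ m - 1)
      = cnt (fun a => A a ∧ pv a = m ∧ I a) := by
    apply cnt_congr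
    intro a
    constructor
    · rintro ⟨⟨hA, h1, hI⟩, h2⟩; exact ⟨hA, by omega, hI⟩
    · rintro ⟨hA, h2, hI⟩; exact ⟨⟨hA, by omega, hI⟩, by omega⟩
  rw [e1, e2] at s3
  omega

lemma abstract_diff2 {α : Type*} [Fintype α] (A : α → Prop) (pv : α → ℕ) (J I : α → Prop)
    (hJI : ∀ a, I a → J a) (m : ℕ) (hm : 1 ≤ m) :
    (cnt (fun a => A a ∧ (pv a ≤ m - 1 ∧ J a) ∧ ¬ (pv a ≤ m - 1 ∧ I a)) : ℤ)
      - cnt (fun a => A a ∧ (pv a ≤ m ∧ J a) ∧ ¬ (pv a ≤ m ∧ I a))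
      = cnt (fun a => A a ∧ pv a = m ∧ I a) - cnt (fun a => A a ∧ pv a = m ∧ J a) := by
  have r1 : cnt (fun a => A a ∧ (pv a ≤ m - 1 ∧ J a) ∧ ¬ (pv a ≤ m - 1 ∧ I a))
      = cnt (fun a => A a ∧ pv a ≤ m - 1 ∧ J a ∧ ¬ I a) := by
    apply cnt_congr; intro a; tauto
  have r2 : cnt (fun a => A a ∧ (pv a ≤ m ∧ J a) ∧ ¬ (pv a ≤ m ∧ I a))
      = cnt (fun a => A a ∧ pv a ≤ m ∧ J a ∧ ¬ I a) := by
    apply cnt_congr; intro a; tauto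
  have s3 := cnt_split (fun a => A a ∧ pv a ≤ m ∧ J a ∧ ¬ I a) (fun a => pv a ≤ m - 1)
  have e1 : cnt (fun a => (A a ∧ pv a ≤ m ∧ J a ∧ ¬ I a) ∧ pv a ≤ m - 1)
      = cnt (fun a => A a ∧ pv a ≤ m - 1 ∧ J a ∧ ¬ I a) := by
    apply cnt_congr; intro a
    constructor
    · rintro ⟨⟨hA, h1, hI⟩, h2⟩; exact ⟨hA, h2, hI⟩
    · rintro ⟨hA, h2, hI⟩; exact ⟨⟨hA, by omega, hI⟩, h2⟩
  have e2 : cnt (fun a => (A a ∧ pv a ≤ m ∧ J a ∧ ¬ I a) ∧ ¬ pv a ≤ m - 1)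
      = cnt (fun a => A a ∧ pv a = m ∧ J a ∧ ¬ I a) := by
    apply cnt_congr; intro a
    constructor
    · rintro ⟨⟨hA, h1, hJ, hI⟩, h2⟩; exact ⟨hA, by omega, hJ, hI⟩
    · rintro ⟨hA, h2, hJ, hI⟩; exact ⟨⟨hA, by omega, hJ, hI⟩, by omega⟩
  have s4 := cnt_split (fun a => A a ∧ pv a = m ∧ J a) (fun a => I a)
  have e3 : cnt (fun a => (A a ∧ pv a = m ∧ J a) ∧ I a)
      = cnt (fun a => A a ∧ pv a = m ∧ I a) := by
    apply cnt_congr; intro a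
    constructor
    · rintro ⟨⟨hA, h1, hJ⟩, hI⟩; exact ⟨hA, h1, hI⟩
    · rintro ⟨hA, h1, hI⟩; exact ⟨⟨hA, h1, hJI a hI⟩, hI⟩
  have e4 : cnt (fun a => (A a ∧ pv a = m ∧ J a) ∧ ¬ I a)
      = cnt (fun a => A a ∧ pv a = m ∧ J a ∧ ¬ I a) := by
    apply cnt_congr; intro a; tauto
  rw [e1, e2] at s3
  rw [e3, e4] at s4
  rw [r1, r2]
  omega

lemma fKm_cnt (k m N : ℕ) :
    fKm k m N = cnt (fun w : Equiv.Perm (Fin N) => ¬ HasRun k N w ∧ permVal N w 1 = m) := by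
  unfold fKm dIm
  rw [cnt_eq_card]
  apply cnt_congr
  intro w
  rw [av_iff]

lemma pv_one_succ {M : ℕ} (w : Equiv.Perm (Fin (M+1))) :
    permVal (M+1) w 1 = (w 0 : ℕ) + 1 := by
  rw [permVal_eq w 1 le_rfl (by omega)]
  rfl

lemma count_fKm (k M m : ℕ) (hk : 2 ≤ k) (hM : 1 ≤ M) (hm1 : 1 ≤ m) (hm : m ≤ M + 1) :
    fKm k m (M+1) = cnt (fun v : Equiv.Perm (Fin M) =>
      ¬ HasRun k M v ∧ ¬ (permVal M v 1 ≤ m - 1 ∧ Ini (k-1) M v)) := by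
  rw [fKm_cnt]
  have hstep : cnt (fun w : Equiv.Perm (Fin (M+1)) => ¬ HasRun k (M+1) w ∧ permVal (M+1) w 1 = m)
      = cnt (fun w : Equiv.Perm (Fin (M+1)) =>
          w 0 = (⟨m-1, by omega⟩ : Fin (M+1)) ∧ ¬ HasRun k (M+1) w) := by
    apply cnt_congr
    intro w
    have h2 : permVal (M+1) w 1 = m ↔ w 0 = (⟨m-1, by omega⟩ : Fin (M+1)) := by
      rw [pv_one_succ, Fin.ext_iff]
      have hc : ((⟨m-1, by omega⟩ : Fin (M+1)) : ℕ) = m - 1 := rfl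
      rw [hc]
      omega
    tauto
  rw [hstep]
  apply card_eq_insert
  intro v
  rw [HasRun_Φ _ _ hM hk]
  have hc : ((⟨m-1, by omega⟩ : Fin (M+1)) : ℕ) = m - 1 := rfl
  rw [hc, not_or]

lemma count_G (k r M m : ℕ) (hk : 2 ≤ k) (hr : 2 ≤ r) (hM : 1 ≤ M) (hm1 : 1 ≤ m)
    (hm : m ≤ M + 1) :
    G k r m (M+1) = cnt (fun v : Equiv.Perm (Fin M) =>
      ¬ HasRun k M v ∧ (permVal M v 1 ≤ m - 1 ∧ Ini (r-1) M v)
        ∧ ¬ (permVal M v 1 ≤ m - 1 ∧ Ini (k-1) M v)) := by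
  unfold G
  have hstep : cnt (fun w : Equiv.Perm (Fin (M+1)) =>
        ¬ HasRun k (M+1) w ∧ permVal (M+1) w 1 = m ∧ Ini r (M+1) w)
      = cnt (fun w : Equiv.Perm (Fin (M+1)) =>
          w 0 = (⟨m-1, by omega⟩ : Fin (M+1)) ∧ (¬ HasRun k (M+1) w ∧ Ini r (M+1) w)) := by
    apply cnt_congr
    intro w
    have h2 : permVal (M+1) w 1 = m ↔ w 0 = (⟨m-1, by omega⟩ : Fin (M+1)) := by
      rw [pv_one_succ, Fin.ext_iff]
      have hc : ((⟨m-1, by omega⟩ : Fin (M+1)) : ℕ) = m - 1 := rfl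
      rw [hc]
      omega
    tauto
  rw [hstep]
  apply card_eq_insert
  intro v
  rw [HasRun_Φ _ _ hM hk, Ini_Φ _ _ hM r hr]
  have hc : ((⟨m-1, by omega⟩ : Fin (M+1)) : ℕ) = m - 1 := rfl
  rw [hc, not_or]
  tauto

lemma cnt_false {α : Type*} [Fintype α] : cnt (fun _ : α => False) = 0 := by
  unfold cnt
  simp

lemma G_top (k m N : ℕ) (hk : 1 ≤ k) : G k k m N = 0 := by
  unfold G
  have h : ∀ w : Equiv.Perm (Fin N),
      (¬ HasRun k N w ∧ permVal N w 1 = m ∧ Ini k N w) ↔ False := by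
    intro w
    simp only [iff_false, not_and]
    rintro hnr - ⟨hkN, hchain⟩
    exact hnr ⟨1, le_rfl, by omega, fun j hj => by
      rw [show 1 + j + 1 = j + 2 from by omega, show 1 + j = j + 1 from by omega]
      exact hchain j hj⟩
  rw [cnt_congr h, cnt_false]

lemma G_one (k m N : ℕ) (hN : 1 ≤ N) : G k 1 m N = fKm k m N := by
  rw [fKm_cnt]
  unfold G
  apply cnt_congr
  intro w
  constructor
  · rintro ⟨h1, h2, h3⟩; exact ⟨h1, h2⟩
  · rintro ⟨h1, h2⟩; exact ⟨h1, h2, hN, fun j hj => by omega⟩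

lemma relA (k M m : ℕ) (hk : 2 ≤ k) (hM : 1 ≤ M) (hm1 : 1 ≤ m) (hm : m ≤ M) :
    (fKm k m (M+1) : ℤ) - fKm k (m+1) (M+1) = G k (k-1) m M := by
  rw [count_fKm k M m hk hM hm1 (by omega), count_fKm k M (m+1) hk hM (by omega) (by omega)]
  simp only [show m + 1 - 1 = m from by omega]
  have H := abstract_diff (fun v : Equiv.Perm (Fin M) => ¬ HasRun k M v)
    (fun v => permVal M v 1) (fun v => Ini (k-1) M v) m hm1
  rw [H]
  rfl

lemma relB (k r M m : ℕ) (hk : 2 ≤ k) (hr : 2 ≤ r) (hrk : r ≤ k) (hM : 1 ≤ M)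
    (hm1 : 1 ≤ m) (hm : m ≤ M) :
    (G k r m (M+1) : ℤ) - G k r (m+1) (M+1)
      = (G k (k-1) m M : ℤ) - G k (r-1) m M := by
  rcases eq_or_lt_of_le hrk with rfl | hlt
  · rw [G_top r m (M+1) (by omega), G_top r (m+1) (M+1) (by omega)]
    simp
  · rw [count_G k r M m hk hr hM hm1 (by omega),
      count_G k r M (m+1) hk hr hM (by omega) (by omega)]
    simp only [show m + 1 - 1 = m from by omega]
    have H := abstract_diff2 (fun v : Equiv.Perm (Fin M) => ¬ HasRun k M v)
      (fun v => permVal M v 1) (fun v => Ini (r-1) M v) (fun v => Ini (k-1) M v)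
      (fun v hI => hI.mono (by omega)) m hm1
    rw [H]
    rfl

noncomputable def bdel (a : ℕ → ℤ) : ℕ → ℤ := fun m => a m - a (m+1)

lemma bdel_iter_eq_sum (j : ℕ) : ∀ (a : ℕ → ℤ) (m : ℕ), (bdel^[j] a) m
    = ∑ i ∈ Finset.range (j+1), (-1:ℤ)^i * (Nat.choose j i : ℤ) * a (m+i) := by
  induction j with
  | zero => intro a m; simp
  | succ j ih =>
    intro a m
    rw [Function.iterate_succ_apply, ih (bdel a) m]
    have hb : ∀ i : ℕ, bdel a (m+i) = a (m+i) - a (m+i+1) := fun i => rfl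
    simp only [hb, mul_sub]
    rw [Finset.sum_sub_distrib]
    symm
    rw [Finset.sum_range_succ'
      (fun i => (-1:ℤ)^i * (Nat.choose (j+1) i : ℤ) * a (m+i)) (j+1)]
    have h1 : ∀ i ∈ Finset.range (j+1),
        (-1:ℤ)^(i+1) * (Nat.choose (j+1) (i+1) : ℤ) * a (m+(i+1))
        = -((-1:ℤ)^i * (Nat.choose j i : ℤ) * a (m+i+1))
          + -((-1:ℤ)^i * (Nat.choose j (i+1) : ℤ) * a (m+i+1)) := by
      intro i _
      rw [Nat.choose_succ_succ, show m+(i+1) = m+i+1 from by omega]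
      push_cast
      ring
    rw [Finset.sum_congr rfl h1, Finset.sum_add_distrib]
    have h3 : ∑ i ∈ Finset.range (j+1), -((-1:ℤ)^i * (Nat.choose j (i+1) : ℤ) * a (m+i+1))
        = ∑ i ∈ Finset.range j, -((-1:ℤ)^i * (Nat.choose j (i+1) : ℤ) * a (m+i+1)) := by
      rw [Finset.sum_range_succ, Nat.choose_succ_self]
      simp
    have h4 : (∑ i ∈ Finset.range (j+1), (-1:ℤ)^i * (Nat.choose j i : ℤ) * a (m+i))
        = (∑ i ∈ Finset.range j, -((-1:ℤ)^i * (Nat.choose j (i+1) : ℤ) * a (m+i+1))) + a m := by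
      rw [Finset.sum_range_succ' (fun i => (-1:ℤ)^i * (Nat.choose j i : ℤ) * a (m+i)) j]
      congr 1
      · apply Finset.sum_congr rfl
        intro i _
        rw [show m+(i+1) = m+i+1 from by omega]
        push_cast
        ring
      · simp
    have h5 : ∑ i ∈ Finset.range (j+1), -((-1:ℤ)^i * (Nat.choose j i : ℤ) * a (m+i+1))
        = -∑ i ∈ Finset.range (j+1), (-1:ℤ)^i * (Nat.choose j i : ℤ) * a (m+i+1) := by
      rw [Finset.sum_neg_distrib]
    have h6 : (-1:ℤ)^0 * (Nat.choose (j+1) 0 : ℤ) * a (m+0) = a m := by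
      simp
    rw [h3, h5, h6]
    linarith [h4]

lemma claim (k n : ℕ) (hk : 2 ≤ k) (hn : 1 ≤ n) :
    ∀ j, 1 ≤ j → j + 1 ≤ k → ∀ m, 1 ≤ m → m + j ≤ n + k →
      (bdel^[j] (fun t => (fKm k t (n+k) : ℤ))) m
        = (-1:ℤ)^j * ((G k (k-j+1) m (n+k-j) : ℤ) - (G k (k-j) m (n+k-j) : ℤ)) := by
  intro j hj1
  induction j, hj1 using Nat.le_induction with
  | base =>
    intro hjk m hm1 hm
    rw [Function.iterate_one]
    show (fKm k m (n+k) : ℤ) - (fKm k (m+1) (n+k) : ℤ) = _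
    have hrel := relA k (n+k-1) m hk (by omega) hm1 (by omega)
    rw [show n+k-1+1 = n+k from by omega] at hrel
    rw [hrel, show k - 1 + 1 = k from by omega, G_top k m (n+k-1) (by omega)]
    push_cast
    ring
  | succ j hj ih =>
    intro hjk m hm1 hm
    have hjk' : j + 1 ≤ k := by omega
    rw [Function.iterate_succ_apply']
    show (bdel^[j] _) m - (bdel^[j] _) (m+1) = _
    rw [ih hjk' m hm1 (by omega), ih hjk' (m+1) (by omega) (by omega)]
    have h1 := relB k (k-j+1) (n+k-j-1) m hk (by omega) (by omega) (by omega) hm1 (by omega)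
    have h2 := relB k (k-j) (n+k-j-1) m hk (by omega) (by omega) (by omega) hm1 (by omega)
    rw [show n+k-j-1+1 = n+k-j from by omega] at h1 h2
    rw [show k-j+1-1 = k-j from by omega] at h1
    rw [show k - (j+1) + 1 = k - j from by omega, show k - (j+1) = k - j - 1 from by omega,
      show n + k - (j+1) = n + k - j - 1 from by omega]
    linear_combination ((-1:ℤ)^j) * h1 - ((-1:ℤ)^j) * h2

lemma main (k n m : ℕ) (hk : 2 ≤ k) (hn : 1 ≤ n) (hm1 : 1 ≤ m) (hmn : m ≤ n) :
    (bdel^[k] (fun t => (fKm k t (n+k) : ℤ))) m = (-1:ℤ)^k * (fKm k m n : ℤ) := by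
  obtain ⟨k', rfl⟩ : ∃ k', k = k' + 1 := ⟨k - 1, by omega⟩
  rw [Function.iterate_succ_apply']
  show (bdel^[k'] _) m - (bdel^[k'] _) (m+1) = _
  have hc := claim (k'+1) n hk hn k' (by omega) (by omega)
  rw [hc m hm1 (by omega), hc (m+1) (by omega) (by omega)]
  rw [show k'+1-k'+1 = 2 from by omega, show k'+1-k' = 1 from by omega,
      show n+(k'+1)-k' = n+1 from by omega]
  have h1 := relB (k'+1) 2 n m hk le_rfl (by omega) hn hm1 hmn
  rw [show k'+1-1 = k' from by omega, show (2:ℕ)-1 = 1 from rfl] at h1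
  have h2 := relA (k'+1) n m hk hn hm1 hmn
  rw [show k'+1-1 = k' from by omega] at h2
  have hg1 := G_one (k'+1) m (n+1) (by omega)
  have hg1' := G_one (k'+1) (m+1) (n+1) (by omega)
  have hg1nz : (G (k'+1) 1 m n : ℤ) = (fKm (k'+1) m n : ℤ) := by
    exact_mod_cast G_one (k'+1) m n hn
  rw [hg1, hg1']
  linear_combination ((-1:ℤ)^k') * h1 - ((-1:ℤ)^k') * h2 - ((-1:ℤ)^k') * hg1nz

end KD

/-- Theorem: `k`-th difference recurrence.
For `k ≥ 2`, `n ≥ 1`, `1 ≤ m ≤ n`, the `k`-th finite difference of the sequence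
`(f_k(1,n+k), …, f_k(n+k,n+k))` equals `(f_k(1,n), …, f_k(n,n))`; explicitly,
`Σ_{i=0}^{k} (-1)^{k-i}·C(k,i)·f_k(m+i, n+k) = f_k(m, n)`. -/
theorem fKm_kth_difference (k n m : ℕ) (hk : 2 ≤ k) (hn : 1 ≤ n)
    (hm : 1 ≤ m) (hmn : m ≤ n) :
    (∑ i ∈ Finset.range (k + 1),
        (-1 : ℤ) ^ (k - i) * (Nat.choose k i : ℤ) * (fKm k (m + i) (n + k) : ℤ))
      = (fKm k m n : ℤ) := by
  have hmain := KD.main k n m hk hn hm hmn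
  have hs := KD.bdel_iter_eq_sum k (fun t => (fKm k t (n+k) : ℤ)) m
  beta_reduce at hs
  rw [hs] at hmain
  have hcongr : ∀ i ∈ Finset.range (k+1),
      (-1 : ℤ) ^ (k - i) * (Nat.choose k i : ℤ) * (fKm k (m + i) (n + k) : ℤ)
      = (-1:ℤ)^k * ((-1:ℤ)^i * (Nat.choose k i : ℤ) * (fKm k (m + i) (n + k) : ℤ)) := by
    intro i hi
    rw [Finset.mem_range] at hi
    have h : (-1:ℤ)^(k-i) * (-1:ℤ)^i = (-1:ℤ)^k := by
      rw [← pow_add, show k - i + i = k from by omega]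
    have h2 : ((-1:ℤ)^i)*((-1:ℤ)^i) = 1 := by
      rw [← mul_pow]; norm_num
    have h3 : (-1:ℤ)^(k-i) = (-1:ℤ)^k * (-1:ℤ)^i := by
      rw [← h, mul_assoc, h2, mul_one]
    rw [h3]
    ring
  rw [Finset.sum_congr rfl hcongr, ← Finset.mul_sum, hmain, ← mul_assoc, ← mul_pow]
  norm_num
end

section
/- For all integers k ≥ 2, every finite set I of positive integers, and every integer n ≥ max(I ∪ {0}) + k − 1, the k-th finite difference of the sequence (d_k(r_{n+k}(I), 1, n+k), d_k(r_{n+k}(I), 2, n+k), ..., d_k(r_{n+k}(I), n+k, n+k)) equals the sequence (d_k(r_n(I), 1, n), ..., d_k(r_n(I), n, n)); explicitly, for 1 ≤ m ≤ n, Σ_{i=0}^{k} (-1)^{k-i}·C(k,i)·d_k(r_{n+k}(I), m+i, n+k) = d_k(r_n(I), m, n). -/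
/-- The `n`-reverse of a set `I`: `r_n(I) = { n + 2 - k - i : i ∈ I }` (with `r_n(∅) = ∅`). -/
def nReverse (k n : ℕ) (I : Finset ℕ) : Finset ℕ :=
  I.image (fun i => n + 2 - k - i)

namespace KDiff

open Equiv Finset

def pfx (N : ℕ) (w : Equiv.Perm (Fin N)) (j : ℕ) : Prop :=
  ∀ a, a + 2 ≤ j → permVal N w (a + 2) < permVal N w (a + 1)

open scoped Classical in
noncomputable def Cnt (k N j m : ℕ) (K : Finset ℕ) : ℕ :=
  (Finset.univ.filter fun w : Equiv.Perm (Fin N) =>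
    (kDescentSet k N w).filter (fun i => 2 ≤ i) = K ∧ permVal N w 1 = m ∧ pfx N w j).card

open scoped Classical in
noncomputable def Bnt (k N j m : ℕ) (K : Finset ℕ) : ℕ :=
  (Finset.univ.filter fun w : Equiv.Perm (Fin N) =>
    kDescentSet k N w = K ∧ permVal N w 1 = m ∧ pfx N w j).card

lemma permVal_eq {N : ℕ} (v : Equiv.Perm (Fin N)) (i : ℕ) (h1 : 1 ≤ i) (h2 : i ≤ N) :
    permVal N v i = (v ⟨i - 1, by omega⟩ : ℕ) + 1 := by
  rw [permVal, dif_pos]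

lemma permVal_one {N : ℕ} (v : Equiv.Perm (Fin (N + 1))) :
    permVal (N + 1) v 1 = (v 0 : ℕ) + 1 := by
  rw [permVal_eq v 1 le_rfl (by omega)]
  rfl

lemma permVal_pos {N : ℕ} (v : Equiv.Perm (Fin N)) (hN : 1 ≤ N) : 1 ≤ permVal N v 1 := by
  rw [permVal_eq v 1 le_rfl hN]; omega

def ins {N : ℕ} (mF : Fin (N + 1)) (e : Equiv.Perm (Fin N)) : Equiv.Perm (Fin (N + 1)) :=
  (finSuccEquiv' 0).trans ((e.optionCongr).trans (finSuccEquiv' mF).symm)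

@[simp] lemma ins_zero {N : ℕ} (mF : Fin (N + 1)) (e : Equiv.Perm (Fin N)) :
    ins mF e 0 = mF := by
  simp [ins, finSuccEquiv'_at, finSuccEquiv'_symm_none]

@[simp] lemma ins_succ {N : ℕ} (mF : Fin (N + 1)) (e : Equiv.Perm (Fin N)) (i : Fin N) :
    ins mF e i.succ = mF.succAbove (e i) := by
  have h0 : (0 : Fin (N + 1)).succAbove i = i.succ := congrFun Fin.succAbove_zero i
  show (finSuccEquiv' mF).symm (e.optionCongr ((finSuccEquiv' 0) i.succ)) = _
  rw [← h0, finSuccEquiv'_succAbove]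
  simp [finSuccEquiv'_symm_some]

def del {N : ℕ} (mF : Fin (N + 1)) (w : Equiv.Perm (Fin (N + 1))) : Equiv.Perm (Fin N) :=
  Equiv.removeNone (((finSuccEquiv' (0 : Fin (N + 1))).symm.trans w).trans (finSuccEquiv' mF))

lemma ins_del {N : ℕ} (mF : Fin (N + 1)) (w : Equiv.Perm (Fin (N + 1))) (hw : w 0 = mF) :
    ins mF (del mF w) = w := by
  set q := ((finSuccEquiv' (0 : Fin (N + 1))).symm.trans w).trans (finSuccEquiv' mF) with hq
  have hnone : q none = none := by
    simp [hq, finSuccEquiv'_symm_none, hw, finSuccEquiv'_at]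
  have hsome : ∀ i : Fin N, q (some i) = some (Equiv.removeNone q i) := by
    intro i
    rcases h : q (some i) with _ | y
    · exact absurd (q.injective (h.trans hnone.symm)) (by simp)
    · rw [← h]; exact (Equiv.removeNone_some q ⟨y, h⟩).symm
  ext x
  refine Fin.cases ?_ ?_ x
  · rw [ins_zero, hw]
  · intro i
    rw [ins_succ]
    have h1 : q (some i) = finSuccEquiv' mF (w i.succ) := by
      have : (finSuccEquiv' (0 : Fin (N + 1))).symm (some i) = i.succ := by
        rw [finSuccEquiv'_symm_some]
        exact congrFun Fin.succAbove_zero i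
      simp [hq, Equiv.trans_apply, this]
    have h2 : some (del mF w i) = finSuccEquiv' mF (w i.succ) := by
      rw [← h1]; exact (hsome i).symm
    have := congrArg (finSuccEquiv' mF).symm h2
    rw [Equiv.symm_apply_apply, finSuccEquiv'_symm_some] at this
    exact congrArg Fin.val this

lemma ins_injective {N : ℕ} (mF : Fin (N + 1)) : Function.Injective (ins (N := N) mF) := by
  intro e1 e2 h
  ext i
  have h1 := DFunLike.congr_fun h i.succ
  rw [ins_succ, ins_succ] at h1
  have := Fin.succAbove_right_injective (p := mF) h1
  exact congrArg Fin.val this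

lemma del_ins {N : ℕ} (mF : Fin (N + 1)) (e : Equiv.Perm (Fin N)) : del mF (ins mF e) = e :=
  ins_injective mF (ins_del mF (ins mF e) (ins_zero mF e))

open scoped Classical in
lemma master {N : ℕ} (mF : Fin (N + 1)) (P : Equiv.Perm (Fin (N + 1)) → Prop)
    (Q : Equiv.Perm (Fin N) → Prop) (h : ∀ e, P (ins mF e) ↔ Q e) :
    (Finset.univ.filter fun w => w 0 = mF ∧ P w).card = (Finset.univ.filter Q).card := by
  refine Finset.card_bij' (fun w _ => del mF w) (fun e _ => ins mF e) ?_ ?_ ?_ ?_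
  · intro w hw
    simp only [Finset.mem_filter, Finset.mem_univ, true_and] at hw ⊢
    rw [← h, ins_del mF w hw.1]
    exact hw.2
  · intro e he
    simp only [Finset.mem_filter, Finset.mem_univ, true_and] at he ⊢
    exact ⟨ins_zero mF e, (h e).2 he⟩
  · intro w hw
    simp only [Finset.mem_filter, Finset.mem_univ, true_and] at hw
    exact ins_del mF w hw.1
  · intro e _
    exact del_ins mF e


lemma ins_pv_head {N : ℕ} (mF : Fin (N + 1)) (e : Equiv.Perm (Fin N)) :
    permVal (N + 1) (ins mF e) 1 = (mF : ℕ) + 1 := by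
  rw [permVal_one, ins_zero]

lemma ins_pv_tail {N : ℕ} (mF : Fin (N + 1)) (e : Equiv.Perm (Fin N)) (i : ℕ)
    (h1 : 1 ≤ i) (h2 : i ≤ N) :
    permVal (N + 1) (ins mF e) (i + 1) = (mF.succAbove (e ⟨i - 1, by omega⟩) : ℕ) + 1 := by
  rw [permVal_eq _ (i + 1) (by omega) (by omega)]
  congr 2
  have : (⟨i + 1 - 1, by omega⟩ : Fin (N + 1)) = Fin.succ ⟨i - 1, by omega⟩ := by
    apply Fin.ext; simp; omega
  rw [this, ins_succ]

lemma ins_lt_tail {N : ℕ} (mF : Fin (N + 1)) (e : Equiv.Perm (Fin N)) (a b : ℕ)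
    (ha1 : 1 ≤ a) (haN : a ≤ N) (hb1 : 1 ≤ b) (hbN : b ≤ N) :
    (permVal (N + 1) (ins mF e) (a + 1) < permVal (N + 1) (ins mF e) (b + 1)) ↔
      permVal N e a < permVal N e b := by
  rw [ins_pv_tail mF e a ha1 haN, ins_pv_tail mF e b hb1 hbN,
    permVal_eq e a ha1 haN, permVal_eq e b hb1 hbN]
  simp only [Nat.add_lt_add_iff_right]
  constructor
  · intro h
    exact Fin.lt_def.1 ((Fin.succAbove_lt_succAbove_iff (p := mF)).1 (Fin.lt_def.2 h))
  · intro h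
    exact Fin.lt_def.1 ((Fin.succAbove_lt_succAbove_iff (p := mF)).2 (Fin.lt_def.2 h))

lemma ins_head_lt {N : ℕ} (mF : Fin (N + 1)) (e : Equiv.Perm (Fin N)) (hN : 1 ≤ N) :
    (permVal (N + 1) (ins mF e) 2 < permVal (N + 1) (ins mF e) 1) ↔
      permVal N e 1 < (mF : ℕ) + 1 := by
  have h2 : (2 : ℕ) = 1 + 1 := rfl
  rw [h2, ins_pv_tail mF e 1 le_rfl hN, ins_pv_head, permVal_eq e 1 le_rfl hN]
  simp only [Nat.add_lt_add_iff_right]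
  set x := e ⟨1 - 1, by omega⟩ with hx
  rcases lt_or_ge (Fin.castSucc x) mF with hc | hc
  · rw [Fin.succAbove_of_castSucc_lt _ _ hc]
    have := Fin.lt_def.1 hc
    simp only [Fin.coe_castSucc] at this ⊢
    try omega
  · rw [Fin.succAbove_of_le_castSucc _ _ hc]
    have := Fin.le_def.1 hc
    simp only [Fin.coe_castSucc, Fin.val_succ] at this ⊢
    omega

lemma mem_kdesc_pos {k N i : ℕ} {w : Equiv.Perm (Fin N)} (h : i ∈ kDescentSet k N w) :
    1 ≤ i := by
  simp only [kDescentSet, Finset.mem_filter, Finset.mem_Icc] at h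
  exact h.1.1

lemma ins_kdesc {k N : ℕ} (mF : Fin (N + 1)) (e : Equiv.Perm (Fin N)) (hk : 2 ≤ k)
    (i : ℕ) (hi : 1 ≤ i) :
    (i + 1 ∈ kDescentSet k (N + 1) (ins mF e)) ↔ i ∈ kDescentSet k N e := by
  simp only [kDescentSet, Finset.mem_filter, Finset.mem_Icc]
  by_cases hkN : k ≤ N
  · by_cases hile : i ≤ N + 1 - k
    · constructor
      · rintro ⟨-, hall⟩
        refine ⟨⟨hi, hile⟩, fun jj hjj => ?_⟩
        have h := hall jj hjj
        have ea : i + 1 + jj + 1 = (i + jj + 1) + 1 := by omega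
        have eb : i + 1 + jj = (i + jj) + 1 := by omega
        rw [ea, eb] at h
        exact (ins_lt_tail mF e (i + jj + 1) (i + jj) (by omega) (by omega) (by omega)
          (by omega)).1 h
      · rintro ⟨-, hall⟩
        refine ⟨⟨by omega, by omega⟩, fun jj hjj => ?_⟩
        have h := hall jj hjj
        have ea : i + 1 + jj + 1 = (i + jj + 1) + 1 := by omega
        have eb : i + 1 + jj = (i + jj) + 1 := by omega
        rw [ea, eb]
        exact (ins_lt_tail mF e (i + jj + 1) (i + jj) (by omega) (by omega) (by omega)
          (by omega)).2 h
    · constructor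
      · rintro ⟨⟨-, h2⟩, -⟩; exfalso; omega
      · rintro ⟨⟨-, h2⟩, -⟩; exfalso; omega
  · constructor
    · rintro ⟨⟨-, h2⟩, -⟩; exfalso; omega
    · rintro ⟨⟨-, h2⟩, -⟩; exfalso; omega

lemma ins_filter_kdesc {k N : ℕ} (mF : Fin (N + 1)) (e : Equiv.Perm (Fin N)) (hk : 2 ≤ k) :
    (kDescentSet k (N + 1) (ins mF e)).filter (fun i => 2 ≤ i) =
      (kDescentSet k N e).image (· + 1) := by
  ext i
  simp only [Finset.mem_filter, Finset.mem_image]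
  constructor
  · rintro ⟨hD, h2⟩
    refine ⟨i - 1, ?_, by omega⟩
    have hieq : i - 1 + 1 = i := by omega
    exact (ins_kdesc mF e hk (i - 1) (by omega)).1 (by rw [hieq]; exact hD)
  · rintro ⟨i', hi', rfl⟩
    have h1 : 1 ≤ i' := mem_kdesc_pos hi'
    exact ⟨(ins_kdesc mF e hk i' h1).2 hi', by omega⟩

lemma ins_pfx {N j : ℕ} (mF : Fin (N + 1)) (e : Equiv.Perm (Fin N)) (hj : 2 ≤ j)
    (hjN : j ≤ N + 1) (hN : 1 ≤ N) :
    pfx (N + 1) (ins mF e) j ↔ (permVal N e 1 < (mF : ℕ) + 1 ∧ pfx N e (j - 1)) := by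
  constructor
  · intro h
    refine ⟨(ins_head_lt mF e hN).1 (h 0 (by omega)), fun a ha => ?_⟩
    have hh := h (a + 1) (by omega)
    have ea : a + 1 + 2 = (a + 2) + 1 := by omega
    have eb : a + 1 + 1 = (a + 1) + 1 := by omega
    rw [ea, eb] at hh
    exact (ins_lt_tail mF e (a + 2) (a + 1) (by omega) (by omega) (by omega) (by omega)).1 hh
  · rintro ⟨h1, h2⟩ a ha
    rcases a with _ | a'
    · exact (ins_head_lt mF e hN).2 h1
    · have hh := h2 a' (by omega)
      have ea : a' + 1 + 2 = (a' + 2) + 1 := by omega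
      have eb : a' + 1 + 1 = (a' + 1) + 1 := by omega
      rw [ea, eb]
      exact (ins_lt_tail mF e (a' + 2) (a' + 1) (by omega) (by omega) (by omega) (by omega)).2 hh


lemma card_filter_congr {α : Type*} {p q : α → Prop} {hp : DecidablePred p}
    {hq : DecidablePred q} {s : Finset α} (h : ∀ a ∈ s, p a ↔ q a) :
    (@Finset.filter α p hp s).card = (@Finset.filter α q hq s).card :=
  congrArg Finset.card (@Finset.filter_congr α p q hp hq s h)

open scoped Classical in
lemma peel2 (k N j m : ℕ) (K : Finset ℕ) (hk : 2 ≤ k) (hj : 2 ≤ j) (hjN : j ≤ N + 1)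
    (hN : 1 ≤ N) (hm : 1 ≤ m) (hmN : m ≤ N + 1) :
    Cnt k (N + 1) j m (K.image (· + 1)) = ∑ p ∈ Finset.Ico 1 m, Bnt k N (j - 1) p K := by
  classical
  set mF : Fin (N + 1) := ⟨m - 1, by omega⟩ with hmF
  have hmval : (mF : ℕ) + 1 = m := by simp only [hmF]; omega
  have hinj : Function.Injective (fun x : ℕ => x + 1) := add_left_injective 1
  have step1 : Cnt k (N + 1) j m (K.image (· + 1)) =
      (Finset.univ.filter fun w : Equiv.Perm (Fin (N + 1)) =>
        w 0 = mF ∧ ((kDescentSet k (N + 1) w).filter (fun i => 2 ≤ i) = K.image (· + 1) ∧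
          pfx (N + 1) w j)).card := by
    unfold Cnt
    congr 1
    apply Finset.filter_congr
    intro w _
    rw [permVal_one]
    constructor
    · rintro ⟨hA, hpv, hp⟩
      refine ⟨Fin.ext ?_, hA, hp⟩
      show (w 0 : ℕ) = m - 1
      omega
    · rintro ⟨h0, hA, hp⟩
      refine ⟨hA, ?_, hp⟩
      rw [h0]
      show m - 1 + 1 = m
      omega
  have hcompat : ∀ e : Equiv.Perm (Fin N),
      ((kDescentSet k (N + 1) (ins mF e)).filter (fun i => 2 ≤ i) = K.image (· + 1) ∧
        pfx (N + 1) (ins mF e) j) ↔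
      (kDescentSet k N e = K ∧ (permVal N e 1 < m ∧ pfx N e (j - 1))) := by
    intro e
    rw [ins_filter_kdesc mF e hk, ins_pfx mF e hj hjN hN, hmval]
    have himg : (kDescentSet k N e).image (· + 1) = K.image (· + 1) ↔ kDescentSet k N e = K :=
      ⟨fun h => Finset.image_injective hinj h, fun h => by rw [h]⟩
    tauto
  have h3 : (Finset.univ.filter (fun e : Equiv.Perm (Fin N) =>
      kDescentSet k N e = K ∧ (permVal N e 1 < m ∧ pfx N e (j - 1)))).card
      = ∑ p ∈ Finset.Ico 1 m, Bnt k N (j - 1) p K := by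
    rw [Finset.card_eq_sum_card_fiberwise (f := fun v => permVal N v 1)
      (t := Finset.Ico 1 m) ?_]
    · apply Finset.sum_congr rfl
      intro p hp
      simp only [Finset.mem_Ico] at hp
      rw [Finset.filter_filter]
      unfold Bnt
      apply card_filter_congr
      intro v _
      constructor
      · rintro ⟨⟨hD, _, hp2⟩, hpv⟩
        exact ⟨hD, hpv, hp2⟩
      · rintro ⟨hD, hpv, hp2⟩
        exact ⟨⟨hD, by omega, hp2⟩, hpv⟩
    · intro v hv
      simp only [Finset.mem_coe, Finset.mem_filter, Finset.mem_univ, true_and] at hv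
      simp only [Finset.mem_coe, Finset.mem_Ico]
      exact ⟨permVal_pos v hN, hv.2.1⟩
  rw [step1]
  refine Eq.trans ?_ h3
  have h2 := master mF
    (fun w => (kDescentSet k (N + 1) w).filter (fun i => 2 ≤ i) = K.image (· + 1) ∧
      pfx (N + 1) w j)
    (fun e => kDescentSet k N e = K ∧ (permVal N e 1 < m ∧ pfx N e (j - 1)))
    hcompat
  refine Eq.trans ?_ (Eq.trans h2 ?_)
  · exact card_filter_congr (fun _ _ => Iff.rfl)
  · exact card_filter_congr (fun _ _ => Iff.rfl)

open scoped Classical in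
lemma peel1 (k N m : ℕ) (K : Finset ℕ) (hk : 2 ≤ k) (hN : 1 ≤ N) (hm : 1 ≤ m)
    (hmN : m ≤ N + 1) :
    Cnt k (N + 1) 1 m (K.image (· + 1)) = dI k N K := by
  classical
  set mF : Fin (N + 1) := ⟨m - 1, by omega⟩ with hmF
  have hinj : Function.Injective (fun x : ℕ => x + 1) := add_left_injective 1
  have step1 : Cnt k (N + 1) 1 m (K.image (· + 1)) =
      (Finset.univ.filter fun w : Equiv.Perm (Fin (N + 1)) =>
        w 0 = mF ∧ ((kDescentSet k (N + 1) w).filter (fun i => 2 ≤ i) = K.image (· + 1))).card := by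
    unfold Cnt
    congr 1
    apply Finset.filter_congr
    intro w _
    rw [permVal_one]
    constructor
    · rintro ⟨hA, hpv, -⟩
      refine ⟨Fin.ext ?_, hA⟩
      show (w 0 : ℕ) = m - 1
      omega
    · rintro ⟨h0, hA⟩
      refine ⟨hA, ?_, fun a ha => absurd ha (by omega)⟩
      rw [h0]
      show m - 1 + 1 = m
      omega
  have hcompat : ∀ e : Equiv.Perm (Fin N),
      ((kDescentSet k (N + 1) (ins mF e)).filter (fun i => 2 ≤ i) = K.image (· + 1)) ↔
      kDescentSet k N e = K := by
    intro e
    rw [ins_filter_kdesc mF e hk]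
    exact ⟨fun h => Finset.image_injective hinj h, fun h => by rw [h]⟩
  have h3 : (Finset.univ.filter (fun e : Equiv.Perm (Fin N) => kDescentSet k N e = K)).card
      = dI k N K := by
    unfold dI
    exact card_filter_congr (fun _ _ => Iff.rfl)
  rw [step1]
  refine Eq.trans ?_ h3
  have h2 := master mF
    (fun w => (kDescentSet k (N + 1) w).filter (fun i => 2 ≤ i) = K.image (· + 1))
    (fun e => kDescentSet k N e = K) hcompat
  refine Eq.trans ?_ (Eq.trans h2 ?_)
  · exact card_filter_congr (fun _ _ => Iff.rfl)
  · exact card_filter_congr (fun _ _ => Iff.rfl)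

lemma peel2_diff (k N j m : ℕ) (K : Finset ℕ) (hk : 2 ≤ k) (hj : 2 ≤ j) (hjN : j ≤ N + 1)
    (hN : 1 ≤ N) (hm : 1 ≤ m) (hmN : m + 1 ≤ N + 1) :
    (Cnt k (N + 1) j (m + 1) (K.image (· + 1)) : ℤ) - Cnt k (N + 1) j m (K.image (· + 1))
      = Bnt k N (j - 1) m K := by
  rw [peel2 k N j (m + 1) K hk hj hjN hN (by omega) (by omega),
    peel2 k N j m K hk hj hjN hN hm (by omega),
    Finset.sum_Ico_succ_top hm]
  push_cast
  ring

lemma peel1_diff (k N m : ℕ) (K : Finset ℕ) (hk : 2 ≤ k) (hN : 1 ≤ N) (hm : 1 ≤ m)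
    (hmN : m + 1 ≤ N + 1) :
    (Cnt k (N + 1) 1 (m + 1) (K.image (· + 1)) : ℤ) - Cnt k (N + 1) 1 m (K.image (· + 1)) = 0 := by
  rw [peel1 k N (m + 1) K hk hN (by omega) (by omega), peel1 k N m K hk hN hm (by omega)]
  ring


open scoped Classical in
lemma BC (k N j m : ℕ) (K : Finset ℕ) (hK : ∀ i ∈ K, 2 ≤ i) (hkN : k ≤ N) (hjk : j ≤ k) :
    Cnt k N j m K = Bnt k N j m K + Cnt k N k m K := by
  classical
  unfold Cnt Bnt
  rw [← Finset.card_filter_add_card_filter_not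
    (s := (Finset.univ.filter fun w : Equiv.Perm (Fin N) =>
      (kDescentSet k N w).filter (fun i => 2 ≤ i) = K ∧ permVal N w 1 = m ∧ pfx N w j))
    (p := fun w : Equiv.Perm (Fin N) => 1 ∉ kDescentSet k N w)]
  congr 1
  · rw [Finset.filter_filter]
    apply card_filter_congr
    intro w _
    constructor
    · rintro ⟨⟨hD, hpv, hp⟩, h1⟩
      refine ⟨?_, hpv, hp⟩
      ext i
      constructor
      · intro hi
        have hpos : 1 ≤ i := mem_kdesc_pos hi
        rcases Nat.lt_or_ge i 2 with h2 | h2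
        · exact absurd (show i = 1 by omega) (fun h => h1 (h ▸ hi))
        · rw [← hD]; exact Finset.mem_filter.2 ⟨hi, h2⟩
      · intro hi
        have h2 : 2 ≤ i := hK i hi
        rw [← hD] at hi
        exact (Finset.mem_filter.1 hi).1
    · rintro ⟨hD, hpv, hp⟩
      refine ⟨⟨?_, hpv, hp⟩, ?_⟩
      · rw [hD]
        exact Finset.filter_true_of_mem hK
      · intro h1
        exact absurd (hK 1 (hD ▸ h1)) (by omega)
  · rw [Finset.filter_filter]
    apply card_filter_congr
    intro w _
    constructor
    · rintro ⟨⟨hD, hpv, hp⟩, h1⟩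
      rw [Classical.not_not] at h1
      refine ⟨hD, hpv, fun a ha => ?_⟩
      simp only [kDescentSet, Finset.mem_filter, Finset.mem_Icc] at h1
      have := h1.2 a (by omega)
      have e1 : 1 + a + 1 = a + 2 := by omega
      have e2 : 1 + a = a + 1 := by omega
      rw [e1, e2] at this
      exact this
    · rintro ⟨hD, hpv, hp⟩
      refine ⟨⟨hD, hpv, fun a ha => hp a (by omega)⟩, ?_⟩
      rw [Classical.not_not]
      simp only [kDescentSet, Finset.mem_filter, Finset.mem_Icc]
      refine ⟨⟨le_rfl, by omega⟩, fun jj hjj => ?_⟩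
      have e1 : 1 + jj + 1 = jj + 2 := by omega
      have e2 : 1 + jj = jj + 1 := by omega
      rw [e1, e2]
      exact hp jj (by omega)

lemma BCz (k N j m : ℕ) (K : Finset ℕ) (hK : ∀ i ∈ K, 2 ≤ i) (hkN : k ≤ N) (hjk : j ≤ k) :
    (Bnt k N j m K : ℤ) = (Cnt k N j m K : ℤ) - Cnt k N k m K := by
  have := BC k N j m K hK hkN hjk
  omega

lemma dIm_eq_Bnt (k N m : ℕ) (K : Finset ℕ) : dIm k K m N = Bnt k N 1 m K := by
  unfold dIm Bnt
  apply card_filter_congr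
  intro w _
  constructor
  · rintro ⟨h1, h2⟩
    exact ⟨h1, h2, fun a ha => absurd ha (by omega)⟩
  · rintro ⟨h1, h2, -⟩
    exact ⟨h1, h2⟩

lemma Ds_succ (s : ℕ) (f : ℕ → ℤ) (m : ℕ) :
    (∑ i ∈ Finset.range (s + 1 + 1), (-1 : ℤ) ^ (s + 1 - i) * ((s + 1).choose i : ℤ) * f (m + i))
      = (∑ i ∈ Finset.range (s + 1), (-1 : ℤ) ^ (s - i) * (s.choose i : ℤ) * f (m + 1 + i))
        - (∑ i ∈ Finset.range (s + 1), (-1 : ℤ) ^ (s - i) * (s.choose i : ℤ) * f (m + i)) := by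
  rw [Finset.sum_range_succ' (fun i => (-1 : ℤ) ^ (s + 1 - i) * ((s + 1).choose i : ℤ) * f (m + i))]
  have key : ∀ i ∈ Finset.range (s + 1),
      (-1 : ℤ) ^ (s + 1 - (i + 1)) * ((s + 1).choose (i + 1) : ℤ) * f (m + (i + 1))
        = (-1 : ℤ) ^ (s - i) * (s.choose i : ℤ) * f (m + 1 + i)
          + (-1 : ℤ) ^ (s - i) * (s.choose (i + 1) : ℤ) * f (m + 1 + i) := by
    intro i _
    have h1 : s + 1 - (i + 1) = s - i := by omega
    have h2 : m + (i + 1) = m + 1 + i := by omega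
    rw [h1, h2, Nat.choose_succ_succ]
    push_cast
    ring
  rw [Finset.sum_congr rfl key]
  have hsecond : (∑ i ∈ Finset.range (s + 1),
      (-1 : ℤ) ^ (s - i) * (s.choose (i + 1) : ℤ) * f (m + 1 + i))
      + (-1 : ℤ) ^ (s + 1 - 0) * ((s + 1).choose 0 : ℤ) * f (m + 0)
      = - ∑ i ∈ Finset.range (s + 1), (-1 : ℤ) ^ (s - i) * (s.choose i : ℤ) * f (m + i) := by
    rw [Finset.sum_range_succ' (fun i => (-1 : ℤ) ^ (s - i) * (s.choose i : ℤ) * f (m + i))]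
    rw [Finset.sum_range_succ (fun i => (-1 : ℤ) ^ (s - i) * (s.choose (i + 1) : ℤ) * f (m + 1 + i))]
    rw [Nat.choose_succ_self, Nat.cast_zero]
    have key2 : ∀ i ∈ Finset.range s,
        (-1 : ℤ) ^ (s - i) * (s.choose (i + 1) : ℤ) * f (m + 1 + i)
          = -((-1 : ℤ) ^ (s - (i + 1)) * (s.choose (i + 1) : ℤ) * f (m + (i + 1))) := by
      intro i hi
      simp only [Finset.mem_range] at hi
      have h1 : s - i = (s - (i + 1)) + 1 := by omega
      have h2 : m + (i + 1) = m + 1 + i := by omega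
      rw [h1, h2, pow_succ]
      ring
    rw [Finset.sum_congr rfl key2, Finset.sum_neg_distrib]
    simp only [Nat.choose_zero_right, Nat.cast_one, Nat.add_zero, Nat.sub_zero, pow_succ]
    ring
  calc (∑ i ∈ Finset.range (s + 1),
      ((-1 : ℤ) ^ (s - i) * (s.choose i : ℤ) * f (m + 1 + i)
        + (-1 : ℤ) ^ (s - i) * (s.choose (i + 1) : ℤ) * f (m + 1 + i)))
      + (-1 : ℤ) ^ (s + 1 - 0) * ((s + 1).choose 0 : ℤ) * f (m + 0)
      = (∑ i ∈ Finset.range (s + 1), (-1 : ℤ) ^ (s - i) * (s.choose i : ℤ) * f (m + 1 + i))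
        + ((∑ i ∈ Finset.range (s + 1), (-1 : ℤ) ^ (s - i) * (s.choose (i + 1) : ℤ) * f (m + 1 + i))
          + (-1 : ℤ) ^ (s + 1 - 0) * ((s + 1).choose 0 : ℤ) * f (m + 0)) := by
        rw [Finset.sum_add_distrib]; ring
    _ = _ := by rw [hsecond]; ring


lemma main_ind (k n : ℕ) (J : Finset ℕ) (hk : 2 ≤ k) (hn1 : k ≤ n + 1)
    (hJ : ∀ x ∈ J, 1 ≤ x) :
    ∀ s, 1 ≤ s → s + 1 ≤ k → ∀ m, 1 ≤ m → m + s ≤ n + k →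
    (∑ i ∈ Finset.range (s + 1), (-1 : ℤ) ^ (s - i) * (s.choose i : ℤ)
        * (dIm k (J.image (· + k)) (m + i) (n + k) : ℤ))
      = (Cnt k (n + (k - s)) (k - s + 1) m (J.image (· + (k - s))) : ℤ)
        - (Cnt k (n + (k - s)) (k - s) m (J.image (· + (k - s))) : ℤ) := by
  have hKt : ∀ t, 1 ≤ t → ∀ x ∈ J.image (· + t), 2 ≤ x := by
    intro t ht x hx
    simp only [Finset.mem_image] at hx
    obtain ⟨y, hy, rfl⟩ := hx
    have := hJ y hy
    omega
  have himgshift : ∀ t : ℕ, J.image (· + (t + 1)) = (J.image (· + t)).image (· + 1) := by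
    intro t
    rw [Finset.image_image]
    rfl
  intro s hs1
  induction s, hs1 using Nat.le_induction with
  | base =>
    intro hsk m hm hms
    set t := k - 1 with ht
    have hk1 : t + 1 = k := by omega
    have hnk : n + k = n + t + 1 := by omega
    have hY : J.image (· + k) = (J.image (· + t)).image (· + 1) := by
      rw [← hk1]
      exact himgshift t
    have hsum : (∑ i ∈ Finset.range (1 + 1), (-1 : ℤ) ^ (1 - i) * ((Nat.choose 1 i : ℕ) : ℤ)
          * (dIm k (J.image (· + k)) (m + i) (n + k) : ℤ))
        = (dIm k (J.image (· + k)) (m + 1) (n + k) : ℤ)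
          - (dIm k (J.image (· + k)) (m + 0) (n + k) : ℤ) := by
      rw [Finset.sum_range_succ, Finset.sum_range_one]
      norm_num
      ring
    have hT : ∀ m', (dIm k (J.image (· + k)) m' (n + k) : ℤ)
        = (Cnt k (n + t + 1) 1 m' ((J.image (· + t)).image (· + 1)) : ℤ)
          - (Cnt k (n + t + 1) k m' ((J.image (· + t)).image (· + 1)) : ℤ) := by
      intro m'
      rw [dIm_eq_Bnt, hY, hnk]
      exact BCz k (n + t + 1) 1 m' _ (by rw [← hY]; exact hKt k (by omega)) (by omega) (by omega)
    have hA := peel1_diff k (n + t) m (J.image (· + t)) hk (by omega) hm (by omega)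
    have hB := peel2_diff k (n + t) k m (J.image (· + t)) hk hk (by omega) (by omega) hm (by omega)
    have hC := BCz k (n + t) (k - 1) m (J.image (· + t)) (hKt t (by omega)) (by omega) (by omega)
    rw [← ht] at hB hC
    have hmz : m + 0 = m := by omega
    rw [hsum, hmz, hT m, hT (m + 1), hk1]
    linarith [hA, hB, hC]
  | succ s hs IH =>
    intro hsk m hm hms
    set t := k - (s + 1) with ht
    have hks : k - s = t + 1 := by omega
    have IH1 := IH (by omega) m (by omega) (by omega)
    have IH2 := IH (by omega) (m + 1) (by omega) (by omega)
    rw [hks] at IH1 IH2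
    rw [Ds_succ s (fun a => (dIm k (J.image (· + k)) a (n + k) : ℤ)) m, IH1, IH2]
    rw [himgshift t]
    have hnt : n + (t + 1) = n + t + 1 := by omega
    rw [hnt]
    have hd1 := peel2_diff k (n + t) (t + 1 + 1) m (J.image (· + t)) hk (by omega) (by omega)
      (by omega) hm (by omega)
    have hd2 := peel2_diff k (n + t) (t + 1) m (J.image (· + t)) hk (by omega) (by omega)
      (by omega) hm (by omega)
    have he1 : t + 1 + 1 - 1 = t + 1 := by omega
    have he2 : t + 1 - 1 = t := by omega
    rw [he1] at hd1
    rw [he2] at hd2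
    have hc1 := BCz k (n + t) (t + 1) m (J.image (· + t)) (hKt t (by omega)) (by omega) (by omega)
    have hc2 := BCz k (n + t) t m (J.image (· + t)) (hKt t (by omega)) (by omega) (by omega)
    linarith [hd1, hd2, hc1, hc2]


end KDiff

/-- Theorem: `k`-th difference recurrence for general `I`.
For `k ≥ 2`, a finite set `I` of positive integers, `n ≥ max(I ∪ {0}) + k - 1`
(note `max(I ∪ {0}) = I.sup id`), and `1 ≤ m ≤ n`,
`Σ_{i=0}^{k} (-1)^{k-i}·C(k,i)·d_k(r_{n+k}(I), m+i, n+k) = d_k(r_n(I), m, n)`. -/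
theorem dIm_kth_difference (k : ℕ) (hk : 2 ≤ k) (I : Finset ℕ)
    (hpos : ∀ i ∈ I, 1 ≤ i) (n : ℕ) (hn : I.sup id + k - 1 ≤ n)
    (m : ℕ) (hm : 1 ≤ m) (hmn : m ≤ n) :
    (∑ i ∈ Finset.range (k + 1),
        (-1 : ℤ) ^ (k - i) * (Nat.choose k i : ℤ) *
          (dIm k (nReverse k (n + k) I) (m + i) (n + k) : ℤ))
      = (dIm k (nReverse k n I) m n : ℤ) := by
  have hJ : ∀ x ∈ nReverse k n I, 1 ≤ x := by
    intro x hx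
    simp only [nReverse, Finset.mem_image] at hx
    obtain ⟨i, hi, rfl⟩ := hx
    have hsup := Finset.le_sup (f := id) hi
    simp only [id] at hsup
    omega
  have hshift : nReverse k (n + k) I = (nReverse k n I).image (· + k) := by
    unfold nReverse
    rw [Finset.image_image]
    apply Finset.image_congr
    intro i hi
    have hsup := Finset.le_sup (f := id) hi
    simp only [id] at hsup
    simp only [Function.comp_apply]
    omega
  rw [hshift]
  have hn1 : k ≤ n + 1 := by omega
  obtain ⟨s0, rfl⟩ : ∃ s0, k = s0 + 1 := ⟨k - 1, by omega⟩
  rw [KDiff.Ds_succ s0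
    (fun a => (dIm (s0 + 1) ((nReverse (s0 + 1) n I).image (· + (s0 + 1))) a (n + (s0 + 1)) : ℤ))
    m]
  have H := KDiff.main_ind (s0 + 1) n (nReverse (s0 + 1) n I) hk hn1 hJ s0 (by omega) (by omega)
  have Hm := H m hm (by omega)
  have Hm1 := H (m + 1) (by omega) (by omega)
  have hks : s0 + 1 - s0 = 1 := by omega
  rw [hks] at Hm Hm1
  rw [Hm, Hm1]
  have hd := KDiff.peel2_diff (s0 + 1) n (1 + 1) m (nReverse (s0 + 1) n I) hk (by omega)
    (by omega) (by omega) hm (by omega)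
  have he : 1 + 1 - 1 = 1 := by omega
  rw [he] at hd
  have ha := KDiff.peel1_diff (s0 + 1) n m (nReverse (s0 + 1) n I) hk (by omega) hm (by omega)
  have hb : (dIm (s0 + 1) (nReverse (s0 + 1) n I) m n : ℤ)
      = (KDiff.Bnt (s0 + 1) n 1 m (nReverse (s0 + 1) n I) : ℤ) := by
    rw [KDiff.dIm_eq_Bnt]
  linarith [hd, ha, hb]
end

section
/- For every integer k ≥ 2 and all positive integers m, n with 2 ≤ m ≤ n, one has f_k(m, n) ≤ f_k(m−1, n); that is, f_k(1,n) ≥ f_k(2,n) ≥ ... ≥ f_k(n,n). -/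
lemma swap_val_lt {n : ℕ} (a b u v : Fin n) (hab : (b : ℕ) + 1 = (a : ℕ))
    (huv : (u : ℕ) < (v : ℕ)) (hva : v ≠ a) :
    ((Equiv.swap a b) u : ℕ) < ((Equiv.swap a b) v : ℕ) := by
  have hva' : (v : ℕ) ≠ (a : ℕ) := fun h => hva (Fin.ext h)
  rw [Equiv.swap_apply_def, Equiv.swap_apply_def]
  split_ifs with h1 h2 h3 h4 <;>
    first
      | (simp only [Fin.ext_iff] at * <;> omega)
      | omega

/-- Proposition: monotonicity. For `k ≥ 2` and `2 ≤ m ≤ n`,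
`f_k(m,n) ≤ f_k(m-1,n)`; that is, `f_k(1,n) ≥ f_k(2,n) ≥ ⋯ ≥ f_k(n,n)`. -/
theorem fKm_antitone (k m n : ℕ) (hk : 2 ≤ k) (hm : 2 ≤ m) (hmn : m ≤ n) :
    fKm k m n ≤ fKm k (m - 1) n := by
  have hn : 0 < n := by omega
  have ha : m - 1 < n := by omega
  have hb : m - 2 < n := by omega
  set a : Fin n := ⟨m - 1, ha⟩ with ha'
  set b : Fin n := ⟨m - 2, hb⟩ with hb'
  set σ : Equiv.Perm (Fin n) := Equiv.swap a b with hσ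
  unfold fKm dIm
  apply Finset.card_le_card_of_injOn (fun w => σ * w)
  · intro w hw
    simp only [Finset.mem_coe, Finset.mem_filter, Finset.mem_univ, true_and] at hw ⊢
    obtain ⟨hdes, hval⟩ := hw
    -- w 0 = a
    have hw0 : w ⟨0, hn⟩ = a := by
      have h01 : (⟨1 - 1, by simpa using hn⟩ : Fin n) = ⟨0, hn⟩ := rfl
      have hv : (w ⟨0, hn⟩ : ℕ) + 1 = m := by
        have := hval
        simp only [permVal] at this
        rw [dif_pos (by simpa using hn)] at this
        rwa [h01] at this
      apply Fin.ext
      simp only [ha']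
      omega
    constructor
    · -- no k-descent for σ * w
      rw [Finset.eq_empty_iff_forall_notMem]
      intro i hi
      simp only [kDescentSet, Finset.mem_filter, Finset.mem_Icc] at hi
      obtain ⟨⟨hi1, hi2⟩, hdec⟩ := hi
      have hkn : k ≤ n := by omega
      -- w is not descending at i, find j
      have hnot : ¬ ∀ j < k - 1, permVal n w (i + j + 1) < permVal n w (i + j) := by
        intro hall
        have : i ∈ kDescentSet k n w := by
          simp only [kDescentSet, Finset.mem_filter, Finset.mem_Icc]
          exact ⟨⟨hi1, hi2⟩, hall⟩
        rw [hdes] at this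
        simp at this
      push_neg at hnot
      obtain ⟨j, hj, hge⟩ := hnot
      have hjb : i + j ≤ n - 1 := by omega
      have hp : i + j - 1 < n := by omega
      have hq : i + j < n := by omega
      set p : Fin n := ⟨i + j - 1, hp⟩ with hp'
      set q : Fin n := ⟨i + j, hq⟩ with hq'
      have hpv : permVal n w (i + j) = (w p : ℕ) + 1 := by
        simp [permVal, hp, hp']
      have hqv : permVal n w (i + j + 1) = (w q : ℕ) + 1 := by
        simp [permVal, hq, hq']
      have hdecj := hdec j hj
      have hpv2 : permVal n (σ * w) (i + j) = (σ (w p) : ℕ) + 1 := by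
        simp [permVal, hp, hp']
      have hqv2 : permVal n (σ * w) (i + j + 1) = (σ (w q) : ℕ) + 1 := by
        simp [permVal, hq, hq']
      rw [hpv2, hqv2] at hdecj
      rw [hpv, hqv] at hge
      -- w p ≠ w q, so w p < w q
      have hpq : p ≠ q := by
        simp only [hp', hq', ne_eq, Fin.mk.injEq]
        omega
      have hwpq : w p ≠ w q := fun h => hpq (w.injective h)
      have hlt : (w p : ℕ) < (w q : ℕ) := by
        have : (w p : ℕ) ≠ (w q : ℕ) := fun h => hwpq (Fin.ext h)
        omega
      -- w q ≠ a since q ≠ 0 and w 0 = a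
      have hq0 : q ≠ ⟨0, hn⟩ := by
        simp only [hq', ne_eq, Fin.mk.injEq]
        omega
      have hwqa : w q ≠ a := by
        rw [← hw0]
        exact fun h => hq0 (w.injective h)
      -- show σ (w p) < σ (w q), contradiction with hdecj
      have hab : a ≠ b := by
        simp only [ha', hb', ne_eq, Fin.mk.injEq]; omega
      have hva : (w q : ℕ) ≠ m - 1 := fun h => hwqa (Fin.ext h)
      have : (σ (w p) : ℕ) < (σ (w q) : ℕ) := by
        apply swap_val_lt
        · simp only [ha', hb']; omega
        · exact hlt
        · exact hwqa
      omega
    · -- value at 1 is m - 1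
      have h01 : ((1:ℕ) - 1) = 0 := rfl
      simp only [permVal, h01]
      rw [dif_pos hn]
      have : (σ * w) ⟨0, hn⟩ = b := by
        simp only [Equiv.Perm.mul_apply, hw0, hσ, Equiv.swap_apply_left]
      rw [this]
      simp only [hb']
      omega
  · intro w1 _ w2 _ h
    exact mul_left_cancel h
end

section
/- For every real number x, setting u = 2πx/(3√3), one has the identity (2π/(3√3)) · ( Σ_{j≥0} u^{3j}/(3j)! − Σ_{j≥0} u^{3j+2}/(3j+2)! ) = (4π/9) · e^{−πx/(3√3)} · sin((x+1)π/3). (This expresses the density φ_3(x) = (1/r_3)(1 − (x/r_3)²/2! + (x/r_3)³/3! − (x/r_3)⁵/5! + (x/r_3)⁶/6! − ...) with r_3 = 3√3/(2π) in closed form.) -/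
open Complex

noncomputable def w3 : ℂ := (-1 + (Real.sqrt 3 : ℂ) * Complex.I) / 2
noncomputable def v3 : ℂ := (-1 - (Real.sqrt 3 : ℂ) * Complex.I) / 2

lemma hs3 : ((Real.sqrt 3 : ℝ) : ℂ) ^ 2 = 3 := by
  norm_cast
  rw [Real.sq_sqrt]; norm_num

lemma w3_quad : w3 ^ 2 + w3 + 1 = 0 := by
  unfold w3
  linear_combination (Complex.I ^ 2 / 4) * hs3 + (3 / 4) * Complex.I_sq

lemma v3_quad : v3 ^ 2 + v3 + 1 = 0 := by
  unfold v3
  linear_combination (Complex.I ^ 2 / 4) * hs3 + (3 / 4) * Complex.I_sq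

lemma w3_cube : w3 ^ 3 = 1 := by linear_combination (w3 - 1) * w3_quad
lemma v3_cube : v3 ^ 3 = 1 := by linear_combination (v3 - 1) * v3_quad

noncomputable def c3 : ℕ → ℂ := fun n => ((1 - w3) * w3 ^ n + (1 - v3) * v3 ^ n) / 3

lemma w3_add_v3 : w3 + v3 = -1 := by unfold w3 v3; ring
lemma w3_mul_v3 : w3 * v3 = 1 := by
  unfold w3 v3
  linear_combination (-(Complex.I ^ 2) / 4) * hs3 + (-3 / 4) * Complex.I_sq

lemma c3_0 (j : ℕ) : c3 (3 * j) = 1 := by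
  unfold c3
  rw [pow_mul, w3_cube, pow_mul, v3_cube]
  simp only [one_pow]
  linear_combination (-1/3 : ℂ) * w3_add_v3

lemma c3_1 (j : ℕ) : c3 (3 * j + 1) = 0 := by
  unfold c3
  rw [pow_succ, pow_mul, w3_cube, pow_succ, pow_mul, v3_cube]
  simp only [one_pow, one_mul]
  linear_combination (2/3 : ℂ) * w3_add_v3 - (1/3 : ℂ) * w3_quad - (1/3 : ℂ) * v3_quad

lemma c3_2 (j : ℕ) : c3 (3 * j + 2) = -1 := by
  unfold c3
  rw [pow_add, pow_mul, w3_cube, pow_add, pow_mul, v3_cube]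
  simp only [one_pow, one_mul]
  linear_combination ((2 - w3)/3) * w3_quad + ((2 - v3)/3) * v3_quad - (1/3 : ℂ) * w3_add_v3

lemma c3_bound (n : ℕ) : ‖c3 n‖ ≤ 1 := by
  have h : n % 3 = 0 ∨ n % 3 = 1 ∨ n % 3 = 2 := by omega
  have hn : n = 3 * (n / 3) + n % 3 := by omega
  rcases h with h | h | h <;> rw [hn, h] <;>
    simp [c3_0, c3_1, c3_2, show 3 * (n/3) + 0 = 3 * (n/3) from rfl]

lemma summableA (u : ℝ) : Summable (fun n : ℕ => c3 n * (u : ℂ) ^ n / (Nat.factorial n : ℂ)) := by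
  apply Summable.of_norm_bounded (g := fun n : ℕ => |u| ^ n / (Nat.factorial n : ℝ))
    (Real.summable_pow_div_factorial |u|)
  intro n
  have h1 : ‖((u : ℂ) ^ n / (Nat.factorial n : ℂ))‖ = |u| ^ n / (Nat.factorial n : ℝ) := by
    rw [norm_div, norm_pow]
    simp [Complex.norm_real, Complex.norm_natCast]
  calc ‖c3 n * (u : ℂ) ^ n / (Nat.factorial n : ℂ)‖
      = ‖c3 n‖ * ‖((u : ℂ) ^ n / (Nat.factorial n : ℂ))‖ := by
        rw [mul_div_assoc, norm_mul]
    _ ≤ 1 * (|u| ^ n / (Nat.factorial n : ℝ)) := by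
        rw [h1]
        apply mul_le_mul_of_nonneg_right (c3_bound n)
        positivity
    _ = |u| ^ n / (Nat.factorial n : ℝ) := one_mul _

lemma tsumA_exp (u : ℝ) :
    ∑' n : ℕ, c3 n * (u : ℂ) ^ n / (Nat.factorial n : ℂ)
      = ((1 - w3) * Complex.exp (w3 * u) + (1 - v3) * Complex.exp (v3 * u)) / 3 := by
  have he : ∀ z : ℂ, Complex.exp z = ∑' n : ℕ, z ^ n / (Nat.factorial n : ℂ) := fun z => by
    rw [Complex.exp_eq_exp_ℂ, NormedSpace.exp_eq_tsum_div]
  have h1 : Summable (fun n : ℕ => (w3 * u) ^ n / (Nat.factorial n : ℂ)) :=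
    NormedSpace.expSeries_div_summable _
  have h2 : Summable (fun n : ℕ => (v3 * u) ^ n / (Nat.factorial n : ℂ)) :=
    NormedSpace.expSeries_div_summable _
  calc ∑' n : ℕ, c3 n * (u : ℂ) ^ n / (Nat.factorial n : ℂ)
      = ∑' n : ℕ, ((1 - w3) / 3 * ((w3 * u) ^ n / (Nat.factorial n : ℂ))
          + (1 - v3) / 3 * ((v3 * u) ^ n / (Nat.factorial n : ℂ))) := by
        apply tsum_congr
        intro n
        unfold c3
        rw [mul_pow, mul_pow]
        ring
    _ = (1 - w3) / 3 * ∑' n : ℕ, (w3 * u) ^ n / (Nat.factorial n : ℂ)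
          + (1 - v3) / 3 * ∑' n : ℕ, (v3 * u) ^ n / (Nat.factorial n : ℂ) := by
        rw [Summable.tsum_add (h1.mul_left _) (h2.mul_left _), tsum_mul_left, tsum_mul_left]
    _ = ((1 - w3) * Complex.exp (w3 * u) + (1 - v3) * Complex.exp (v3 * u)) / 3 := by
        rw [he, he]; ring

lemma summable_real_part (u : ℝ) (k : ℕ) :
    Summable (fun j : ℕ => u ^ (3 * j + k) / (Nat.factorial (3 * j + k) : ℝ)) := by
  have hinj : Function.Injective (fun j : ℕ => 3 * j + k) := fun a b hab => by
    simpa using (by omega : 3 * a + k = 3 * b + k → a = b) hab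
  have h := (Real.summable_pow_div_factorial |u|).comp_injective hinj
  apply Summable.of_norm_bounded h
  intro j
  show ‖u ^ (3 * j + k) / (Nat.factorial (3 * j + k) : ℝ)‖
      ≤ |u| ^ (3 * j + k) / (Nat.factorial (3 * j + k) : ℝ)
  rw [Real.norm_eq_abs, abs_div, _root_.abs_pow, Nat.abs_cast]

set_option maxHeartbeats 1000000 in
lemma tsumA_split (u : ℝ) :
    ∑' n : ℕ, c3 n * (u : ℂ) ^ n / (Nat.factorial n : ℂ)
      = (((∑' j : ℕ, u ^ (3 * j) / (Nat.factorial (3 * j) : ℝ))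
          - ∑' j : ℕ, u ^ (3 * j + 2) / (Nat.factorial (3 * j + 2) : ℝ) : ℝ) : ℂ) := by
  set A : ℕ → ℂ := fun n => c3 n * (u : ℂ) ^ n / (Nat.factorial n : ℂ) with hAdef
  have hA : Summable A := summableA u
  have h0 : ∑' n : ℕ, A n = ∑' p : ℕ × Fin 3, A ((Nat.divModEquiv 3).symm p) :=
    ((Nat.divModEquiv 3).symm.tsum_eq A).symm
  have h1 : ∑' p : ℕ × Fin 3, A ((Nat.divModEquiv 3).symm p)
      = ∑' (b : ℕ), ∑' (c : Fin 3), A ((Nat.divModEquiv 3).symm (b, c)) :=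
    Summable.tsum_prod' ((Nat.divModEquiv 3).symm.summable_iff.mpr hA) (fun b => .of_finite)
  have hval : ∀ b : ℕ, ∑' (c : Fin 3), A ((Nat.divModEquiv 3).symm (b, c))
      = (((u ^ (3 * b) / (Nat.factorial (3 * b) : ℝ))
          - u ^ (3 * b + 2) / (Nat.factorial (3 * b + 2) : ℝ) : ℝ) : ℂ) := by
    intro b
    rw [tsum_fintype, Fin.sum_univ_three]
    have e0 : (Nat.divModEquiv 3).symm (b, 0) = 3 * b := by
      simp [Nat.divModEquiv, mul_comm]
    have e1 : (Nat.divModEquiv 3).symm (b, 1) = 3 * b + 1 := by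
      simp [Nat.divModEquiv, mul_comm]
    have e2 : (Nat.divModEquiv 3).symm (b, 2) = 3 * b + 2 := by
      simp [Nat.divModEquiv, mul_comm]
    rw [e0, e1, e2]
    simp only [hAdef, c3_0, c3_1, c3_2, one_mul, zero_mul, neg_mul, zero_div, add_zero]
    push_cast
    ring
  rw [h0, h1, tsum_congr hval]
  rw [← Complex.ofReal_tsum]
  congr 1
  have h30 : Summable (fun j : ℕ => u ^ (3 * j) / (Nat.factorial (3 * j) : ℝ)) := by
    simpa using summable_real_part u 0
  exact Summable.tsum_sub h30 (summable_real_part u 2)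

lemma exp_w3 (u : ℝ) : Complex.exp (w3 * u)
    = (Real.exp (-u / 2) : ℂ) *
      ((Real.cos (Real.sqrt 3 * u / 2) : ℂ) + (Real.sin (Real.sqrt 3 * u / 2) : ℂ) * Complex.I) := by
  have h : w3 * (u : ℂ) = ((-u / 2 : ℝ) : ℂ) + ((Real.sqrt 3 * u / 2 : ℝ) : ℂ) * Complex.I := by
    unfold w3; push_cast; ring
  rw [h, Complex.exp_add, Complex.exp_mul_I, Complex.ofReal_exp, ← Complex.ofReal_cos,
    ← Complex.ofReal_sin]

lemma exp_v3 (u : ℝ) : Complex.exp (v3 * u)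
    = (Real.exp (-u / 2) : ℂ) *
      ((Real.cos (Real.sqrt 3 * u / 2) : ℂ) - (Real.sin (Real.sqrt 3 * u / 2) : ℂ) * Complex.I) := by
  have h : v3 * (u : ℂ) = ((-u / 2 : ℝ) : ℂ) + ((-(Real.sqrt 3 * u / 2) : ℝ) : ℂ) * Complex.I := by
    unfold v3; push_cast; ring
  rw [h, Complex.exp_add, Complex.exp_mul_I, Complex.ofReal_exp, ← Complex.ofReal_cos,
    ← Complex.ofReal_sin, Real.cos_neg, Real.sin_neg]
  push_cast
  ring

lemma phi3_key (u : ℝ) :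
    (∑' j : ℕ, u ^ (3 * j) / (Nat.factorial (3 * j) : ℝ))
      - (∑' j : ℕ, u ^ (3 * j + 2) / (Nat.factorial (3 * j + 2) : ℝ))
    = Real.exp (-u / 2) * (2 * Real.sqrt 3 / 3) *
        Real.sin (Real.sqrt 3 * u / 2 + Real.pi / 3) := by
  have hsin : Real.sin (Real.sqrt 3 * u / 2 + Real.pi / 3)
      = Real.sin (Real.sqrt 3 * u / 2) * (1 / 2)
        + Real.cos (Real.sqrt 3 * u / 2) * (Real.sqrt 3 / 2) := by
    rw [Real.sin_add, Real.cos_pi_div_three, Real.sin_pi_div_three]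
  apply Complex.ofReal_injective
  rw [← tsumA_split u, tsumA_exp u, exp_w3 u, exp_v3 u, hsin]
  unfold w3 v3
  push_cast
  linear_combination
    (-(Complex.exp (-(u : ℂ) / 2) * ((Real.sqrt 3 : ℝ) : ℂ) *
        Complex.sin (((Real.sqrt 3 : ℝ) : ℂ) * (u : ℂ) / 2)) / 3) * Complex.I_sq
    + (-(Complex.exp (-(u : ℂ) / 2) *
        Complex.cos (((Real.sqrt 3 : ℝ) : ℂ) * (u : ℂ) / 2)) / 3) * hs3


/-- closed form for `φ_3`. For every real `x`, with
`u = 2πx/(3√3)`,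
`(2π/(3√3)) · ( Σ_{j≥0} u^{3j}/(3j)! − Σ_{j≥0} u^{3j+2}/(3j+2)! )
  = (4π/9) · e^{−πx/(3√3)} · sin((x+1)π/3)`. -/
theorem phi3_closed_form (x : ℝ) :
    (2 * Real.pi / (3 * Real.sqrt 3)) *
      ((∑' j : ℕ, (2 * Real.pi * x / (3 * Real.sqrt 3)) ^ (3 * j) /
          (Nat.factorial (3 * j) : ℝ)) -
       (∑' j : ℕ, (2 * Real.pi * x / (3 * Real.sqrt 3)) ^ (3 * j + 2) /
          (Nat.factorial (3 * j + 2) : ℝ)))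
      = (4 * Real.pi / 9) * Real.exp (-(Real.pi * x) / (3 * Real.sqrt 3)) *
          Real.sin ((x + 1) * Real.pi / 3) := by
  have h3 : Real.sqrt 3 ≠ 0 := ne_of_gt (Real.sqrt_pos.mpr (by norm_num))
  have h33 : Real.sqrt 3 * Real.sqrt 3 = 3 := Real.mul_self_sqrt (by norm_num)
  rw [phi3_key (2 * Real.pi * x / (3 * Real.sqrt 3))]
  have e1 : -(2 * Real.pi * x / (3 * Real.sqrt 3)) / 2 = -(Real.pi * x) / (3 * Real.sqrt 3) := by
    ring
  have e2 : Real.sqrt 3 * (2 * Real.pi * x / (3 * Real.sqrt 3)) / 2 + Real.pi / 3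
      = (x + 1) * Real.pi / 3 := by
    field_simp
  rw [e1, e2]
  field_simp
  set E := Real.exp (-(Real.pi * x) / (3 * Real.sqrt 3))
  set S := Real.sin ((x + 1) * Real.pi / 3)
  ring
end
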